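/- arXiv:2001.08875 — 6 statements merged into one kernel-verified Lean document; each statement's English description precedes it below -/
import Mathlib

section
/- Let p be a prime, s, e positive integers, and let D = {d_1, d_2, …, d_n} be a subset of F_{p^s}^e \ {(0,…,0)}. Let C_D = {(Tr(x·d_1), Tr(x·d_2), …, Tr(x·d_n)) : x ∈ F_{p^s}^e} be the p-ary linear code of length n, where Tr is the trace from F_{p^s} to F_p and x·d is the standard inner product on F_{p^s}^e. If the dimension of C_D over F_p equals es, then for every r with 1 ≤ r ≤ es, the r-th generalized Hamming weight satisfies d_r(C_D) = n − max{|D ∩ H| : H an (es−r)-dimensional F_p-subspace of F_{p^s}^e}. -/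
open scoped BigOperators

noncomputable section

namespace Paper0

/-- The `r`-th generalized Hamming weight of a linear code `C ⊆ F_p^ι`:
the minimum support size of an `r`-dimensional subspace of `C`. -/
def GHW (p : ℕ) {ι : Type*} (C : Submodule (ZMod p) (ι → ZMod p)) (r : ℕ) : ℕ :=
  sInf {n | ∃ V : Submodule (ZMod p) (ι → ZMod p), V ≤ C ∧
    Module.finrank (ZMod p) ↥V = r ∧ {i : ι | ∃ c ∈ V, c i ≠ 0}.ncard = n}

/-- The `F_p`-linear map sending `x ∈ K^e` to the word `(Tr(x·d))_{d ∈ D}`;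
its range is the code `C_D`. -/
def codeMap (p e : ℕ) {K : Type*} [Field K] [Fintype K] [Algebra (ZMod p) K]
    (D : Finset (Fin e → K)) :
    (Fin e → K) →ₗ[ZMod p] (↥D → ZMod p) :=
  LinearMap.pi fun d =>
    (Algebra.trace (ZMod p) K).comp
      (∑ i, (LinearMap.mulLeft (ZMod p) ((d : Fin e → K) i)).comp (LinearMap.proj i))

theorem stmt0 (p s e : ℕ) (hp : p.Prime) (hs : 1 ≤ s) (he : 1 ≤ e)
    {K : Type*} [Field K] [Fintype K] [Algebra (ZMod p) K]
    (hK : Fintype.card K = p ^ s)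
    (D : Finset (Fin e → K)) (hD : ∀ x ∈ D, x ≠ 0)
    (hdim : Module.finrank (ZMod p) ↥(LinearMap.range (codeMap p e D)) = e * s)
    (r : ℕ) (hr1 : 1 ≤ r) (hr2 : r ≤ e * s) :
    GHW p (LinearMap.range (codeMap p e D)) r =
      D.card - sSup {k | ∃ H : Submodule (ZMod p) (Fin e → K),
        Module.finrank (ZMod p) ↥H = e * s - r ∧
        {x : Fin e → K | x ∈ D ∧ x ∈ H}.ncard = k} := by
  classical
  haveI := Fact.mk hp
  haveI : FiniteDimensional (ZMod p) K := Module.Finite.of_finite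
  -- finrank of K over ZMod p is s
  have hKs : Module.finrank (ZMod p) K = s := by
    have := Module.card_eq_pow_finrank (K := ZMod p) (V := K)
    rw [ZMod.card, hK] at this
    exact (Nat.pow_right_injective hp.two_le this.symm)
  -- finrank of the ambient space
  have hVs : Module.finrank (ZMod p) (Fin e → K) = e * s := by
    simp [Module.finrank_pi_fintype, hKs, Finset.sum_const, mul_comm]
  -- the bilinear form
  set B : LinearMap.BilinForm (ZMod p) (Fin e → K) :=
    ∑ i, (Algebra.traceForm (ZMod p) K).compl₁₂ (LinearMap.proj i) (LinearMap.proj i)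
    with hBdef
  have hBapp : ∀ x y : Fin e → K,
      B x y = ∑ i, Algebra.trace (ZMod p) K (x i * y i) := by
    intro x y
    simp [hBdef, Algebra.traceForm_apply]
  have hBsymm : ∀ x y, B x y = B y x := by
    intro x y
    simp [hBapp, mul_comm]
  have hBrefl : B.IsRefl := fun x y h => by rw [hBsymm] at h; exact h
  have hBnd : B.Nondegenerate := by
    refine (LinearMap.IsRefl.nondegenerate_iff_separatingLeft hBrefl).mpr ?_
    intro x hx
    funext i
    refine (traceForm_nondegenerate (ZMod p) K).1 (x i) (fun c => ?_)
    have := hx (Pi.single i c)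
    rw [hBapp] at this
    rw [Finset.sum_eq_single i (fun j _ hj => by simp [Pi.single_eq_of_ne hj])
      (by simp)] at this
    simpa [Algebra.traceForm_apply] using this
  -- codeMap in terms of B
  have hcode : ∀ x (d : ↥D), codeMap p e D x d = B x ↑d := by
    intro x d
    simp only [codeMap, LinearMap.pi_apply, LinearMap.comp_apply, hBapp,
      LinearMap.sum_apply, map_sum]
    congr 1
    ext i
    simp [LinearMap.mulLeft_apply, mul_comm]
  set φ := codeMap p e D with hφdef
  -- injectivity
  have hinj : Function.Injective φ := by
    rw [← LinearMap.ker_eq_bot]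
    have hrn := LinearMap.finrank_range_add_finrank_ker φ
    rw [hdim, hVs] at hrn
    have : Module.finrank (ZMod p) ↥(LinearMap.ker φ) = 0 := by omega
    exact Submodule.finrank_eq_zero.mp this
  -- key support computation
  have key : ∀ W : Submodule (ZMod p) (Fin e → K),
      {i : ↥D | ∃ c ∈ Submodule.map φ W, c i ≠ 0}.ncard =
        D.card - {x : Fin e → K | x ∈ D ∧ x ∈ B.orthogonal W}.ncard := by
    intro W
    have hset : {i : ↥D | ∃ c ∈ Submodule.map φ W, c i ≠ 0} =
        {i : ↥D | (↑i : Fin e → K) ∈ B.orthogonal W}ᶜ := by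
      ext d
      simp only [Set.mem_setOf_eq, Set.mem_compl_iff, Submodule.mem_map,
        LinearMap.BilinForm.mem_orthogonal_iff, not_forall]
      constructor
      · rintro ⟨c, ⟨x, hxW, rfl⟩, hc⟩
        exact ⟨x, hxW, fun h => hc (by rw [hcode]; exact h)⟩
      · rintro ⟨x, hxW, hx⟩
        exact ⟨φ x, ⟨x, hxW, rfl⟩, fun h => hx (show (B x) ↑d = 0 by rw [← hcode x d]; exact h)⟩
    have himg : Subtype.val '' {i : ↥D | (↑i : Fin e → K) ∈ B.orthogonal W} =
        {x : Fin e → K | x ∈ D ∧ x ∈ B.orthogonal W} := by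
      ext x
      simp [Set.mem_image]
      tauto
    have hcnt : {i : ↥D | (↑i : Fin e → K) ∈ B.orthogonal W}.ncard =
        {x : Fin e → K | x ∈ D ∧ x ∈ B.orthogonal W}.ncard := by
      rw [← himg, Set.ncard_image_of_injective _ Subtype.val_injective]
    have hcompl := Set.ncard_add_ncard_compl
      {i : ↥D | (↑i : Fin e → K) ∈ B.orthogonal W}
    rw [hset, ← hcnt]
    have hcard : Nat.card ↥D = D.card := by simp [Nat.card_eq_fintype_card]
    omega
  -- finrank of map
  have hmapfr : ∀ W : Submodule (ZMod p) (Fin e → K),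
      Module.finrank (ZMod p) ↥(Submodule.map φ W) = Module.finrank (ZMod p) ↥W :=
    fun W => (Submodule.equivMapOfInjective φ hinj W).symm.finrank_eq
  -- the two sets coincide
  set T := {k | ∃ H : Submodule (ZMod p) (Fin e → K),
      Module.finrank (ZMod p) ↥H = e * s - r ∧
      {x : Fin e → K | x ∈ D ∧ x ∈ H}.ncard = k} with hT
  have hSeq : {n | ∃ V : Submodule (ZMod p) (↥D → ZMod p),
      V ≤ LinearMap.range φ ∧ Module.finrank (ZMod p) ↥V = r ∧
      {i : ↥D | ∃ c ∈ V, c i ≠ 0}.ncard = n} = (fun k => D.card - k) '' T := by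
    ext m
    constructor
    · rintro ⟨V, hVC, hVr, rfl⟩
      set W := Submodule.comap φ V with hW
      have hmap : Submodule.map φ W = V := Submodule.map_comap_eq_self (by
        simpa using hVC)
      refine ⟨{x : Fin e → K | x ∈ D ∧ x ∈ B.orthogonal W}.ncard, ⟨B.orthogonal W, ?_, rfl⟩, ?_⟩
      · rw [LinearMap.BilinForm.finrank_orthogonal hBnd, hVs]
        rw [← hVr, ← hmap, hmapfr]
      · rw [← hmap, key]
    · rintro ⟨k, ⟨H, hHr, rfl⟩, rfl⟩
      set W := B.orthogonal H with hW
      have hWr : Module.finrank (ZMod p) ↥W = r := by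
        rw [hW, LinearMap.BilinForm.finrank_orthogonal hBnd, hVs, hHr]
        omega
      refine ⟨Submodule.map φ W, ?_, ?_, ?_⟩
      · rintro y ⟨x, -, rfl⟩
        exact ⟨x, rfl⟩
      · rw [hmapfr, hWr]
      · rw [key, hW, LinearMap.BilinForm.orthogonal_orthogonal hBnd hBrefl]
  -- T is nonempty and bounded above
  have hTne : T.Nonempty := by
    have hb := Module.finBasis (ZMod p) (Fin e → K)
    rw [hVs] at hb
    set v : Fin (e * s - r) → (Fin e → K) := fun i => hb (Fin.castLE (by omega) i) with hv
    have hli : LinearIndependent (ZMod p) v :=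
      hb.linearIndependent.comp _ (Fin.castLE_injective _)
    refine ⟨_, ⟨Submodule.span (ZMod p) (Set.range v), ?_, rfl⟩⟩
    rw [finrank_span_eq_card hli, Fintype.card_fin]
  have hTbdd : ∀ k ∈ T, k ≤ D.card := by
    rintro k ⟨H, _, rfl⟩
    calc {x : Fin e → K | x ∈ D ∧ x ∈ H}.ncard ≤ (↑D : Set (Fin e → K)).ncard :=
          Set.ncard_le_ncard (fun x hx => hx.1) (D.finite_toSet)
      _ = D.card := by simp
  have hbdd : BddAbove T := ⟨D.card, fun k hk => hTbdd k hk⟩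
  have hmem : sSup T ∈ T := Nat.sSup_mem hTne hbdd
  -- conclude
  rw [GHW, hSeq]
  apply le_antisymm
  · exact Nat.sInf_le ⟨sSup T, hmem, rfl⟩
  · refine le_csInf (⟨D.card - sSup T, sSup T, hmem, rfl⟩) ?_
    rintro m ⟨k, hk, rfl⟩
    exact Nat.sub_le_sub_left (le_csSup hbdd hk) _

end Paper0
end
end

section
/- For every a ∈ F_q, S(a) = Σ_{i=0}^{l^{m−1}−1} (−1)^{wt(a^{(i)})} · (l − 2·wt(a^{(i)})). -/
open scoped BigOperators

noncomputable section

namespace Paper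

/-- The additive character value `(-1)^{Tr(x)}` as an integer, where `Tr` is the
trace from `F` to `F_2`. -/
def chi {F : Type*} [Field F] [Fintype F] [Algebra (ZMod 2) F] (x : F) : ℤ :=
  if Algebra.trace (ZMod 2) F x = 0 then 1 else -1

/-- The exponential sum `S(a,b) = Σ_{x ∈ F_q^*} (-1)^{Tr(a x^{(q-1)/l^m} + b x)}`. -/
def Sab (l m : ℕ) {F : Type*} [Field F] [Fintype F] [Algebra (ZMod 2) F] (a b : F) : ℤ :=
  letI : Fintype Fˣ := Fintype.ofFinite Fˣ
  ∑ x : Fˣ, chi (a * (x : F) ^ ((Fintype.card F - 1) / l ^ m) + b * (x : F))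

/-- The exponential sum `S(a) = Σ_{i=0}^{l^m-1} (-1)^{Tr(a α^i)}`. -/
def Sa (l m : ℕ) {F : Type*} [Field F] [Fintype F] [Algebra (ZMod 2) F] (α a : F) : ℤ :=
  ∑ i ∈ Finset.range (l ^ m), chi (a * α ^ i)

/-- The defining set `D_{(a,b)} = {(x,y) ≠ (0,0) : Tr(a x^{(q-1)/l^m} + b y) = 0}`. -/
def Dset (l m : ℕ) {F : Type*} [Field F] [Fintype F] [Algebra (ZMod 2) F] (a b : F) :
    Set (F × F) :=
  {p | p ≠ 0 ∧
    Algebra.trace (ZMod 2) F (a * p.1 ^ ((Fintype.card F - 1) / l ^ m) + b * p.2) = 0}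

/-- The `F_2`-linear map sending `(u,v) ∈ F_q²` to the codeword
`(Tr(u x + v y))_{(x,y) ∈ D_{(a,b)}}`; its range is the code `C_{D_{(a,b)}}`. -/
def cmap (l m : ℕ) {F : Type*} [Field F] [Fintype F] [Algebra (ZMod 2) F] (a b : F) :
    (F × F) →ₗ[ZMod 2] (↥(Dset l m a b) → ZMod 2) :=
  LinearMap.pi fun d =>
    (Algebra.trace (ZMod 2) F).comp
      ((LinearMap.mulLeft (ZMod 2) (d : F × F).1).comp (LinearMap.fst (ZMod 2) F F) +
       (LinearMap.mulLeft (ZMod 2) (d : F × F).2).comp (LinearMap.snd (ZMod 2) F F))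

/-- Hamming weight of a word indexed by `ι`. -/
def hwt {ι : Type*} (c : ι → ZMod 2) : ℕ := {i | c i ≠ 0}.ncard

/-- Hamming weight of the codeword `c_{(u,v)}` of `C_{D_{(a,b)}}`. -/
def cwt (l m : ℕ) {F : Type*} [Field F] [Fintype F] [Algebra (ZMod 2) F] (a b u v : F) : ℕ :=
  {p : F × F | p ∈ Dset l m a b ∧ Algebra.trace (ZMod 2) F (u * p.1 + v * p.2) ≠ 0}.ncard

/-- The `r`-th generalized Hamming weight of a linear code `C ⊆ F_p^ι`:
the minimum support size of an `r`-dimensional subspace of `C`. -/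
def GHW (p : ℕ) {ι : Type*} (C : Submodule (ZMod p) (ι → ZMod p)) (r : ℕ) : ℕ :=
  sInf {n | ∃ V : Submodule (ZMod p) (ι → ZMod p), V ≤ C ∧
    Module.finrank (ZMod p) ↥V = r ∧ {i : ι | ∃ c ∈ V, c i ≠ 0}.ncard = n}

/-- The Hamming weight `wt(u^{(i)})` of the sub-vector
`u^{(i)} = (a_{l^{m-1}-i}, a_{2 l^{m-1}-i}, …, a_{(l-1) l^{m-1}-i})` of the coordinate
vector of `u` in the basis `{α, α², …, α^{φ(l^m)}}` (the basis `B`, indexed so that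
`B j = α^{j+1}`). -/
def wtCoord (l m : ℕ) {F : Type*} [Field F] [Fintype F] [Algebra (ZMod 2) F]
    (B : Module.Basis (Fin (Nat.totient (l ^ m))) (ZMod 2) F) (i : ℕ) (u : F) : ℕ :=
  {k : ℕ | k < l - 1 ∧ ∃ h : (k + 1) * l ^ (m - 1) - i - 1 < Nat.totient (l ^ m),
      B.repr u ⟨(k + 1) * l ^ (m - 1) - i - 1, h⟩ = 1}.ncard

/-- The exponential sum `B_{H_r} = Σ_{(x,y) ∈ F_q²} Σ_{β ∈ H_r}
(-1)^{Tr(β·(x,y) + a x^{(q-1)/l^m} + b y)}`. -/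
def BH (l m : ℕ) {F : Type*} [Field F] [Fintype F] [Algebra (ZMod 2) F] (a b : F)
    (H : Submodule (ZMod 2) (F × F)) : ℤ :=
  letI : Fintype ↥H := Fintype.ofFinite ↥H
  ∑ p : F × F, ∑ β : ↥H,
    chi ((β : F × F).1 * p.1 + (β : F × F).2 * p.2
      + a * p.1 ^ ((Fintype.card F - 1) / l ^ m) + b * p.2)


section Helpers


def e2 (u : ZMod 2) : ℤ := if u = 0 then 1 else -1

lemma e2_add (u v : ZMod 2) : e2 (u + v) = e2 u * e2 v := by revert u v; decide

lemma e2_sum {ι : Type*} (s : Finset ι) (f : ι → ZMod 2) :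
    e2 (∑ k ∈ s, f k) = ∏ k ∈ s, e2 (f k) := by
  classical
  induction s using Finset.cons_induction with
  | empty => simp [e2]
  | cons a s ha ih => rw [Finset.sum_cons, Finset.prod_cons, e2_add, ih]

lemma e2_eq_ite (u : ZMod 2) : e2 u = if u = 1 then (-1 : ℤ) else 1 := by revert u; decide

lemma e2_prod {ι : Type*} (s : Finset ι) (f : ι → ZMod 2) :
    ∏ k ∈ s, e2 (f k) = (-1) ^ (s.filter (fun k => f k = 1)).card := by
  classical
  simp_rw [e2_eq_ite]
  rw [Finset.prod_ite, Finset.prod_const, Finset.prod_const, one_pow, mul_one]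

lemma e2_sumval {ι : Type*} (s : Finset ι) (f : ι → ZMod 2) :
    ∑ k ∈ s, e2 (f k) = (s.card : ℤ) - 2 * (s.filter (fun k => f k = 1)).card := by
  classical
  simp_rw [e2_eq_ite]
  rw [Finset.sum_ite, Finset.sum_const, Finset.sum_const]
  have := Finset.card_filter_add_card_filter_not (s := s) (p := fun k => f k = 1)
  have h2 : ((s.filter (fun k => ¬ f k = 1)).card : ℤ)
      = (s.card : ℤ) - (s.filter (fun k => f k = 1)).card := by
    rw [← this]; push_cast; ring
  simp only [nsmul_eq_mul]
  rw [h2]; push_cast; ring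


variable {F : Type*} [Field F] [Fintype F] [Algebra (ZMod 2) F]

lemma charF : CharP F 2 :=
  charP_of_injective_algebraMap (algebraMap (ZMod 2) F).injective 2

lemma tr_sq (x : F) : Algebra.trace (ZMod 2) F (x ^ 2) = Algebra.trace (ZMod 2) F x := by
  haveI := charF (F := F)
  haveI : ExpChar F 2 := ExpChar.prime Nat.prime_two
  let e : F ≃ₐ[ZMod 2] F :=
    AlgEquiv.ofRingEquiv (f := frobeniusEquiv F 2) (fun c => by
      show (algebraMap (ZMod 2) F c) ^ 2 = algebraMap (ZMod 2) F c
      rw [← map_pow]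
      congr 1
      revert c; decide)
  have := Algebra.trace_eq_of_algEquiv e x
  rw [show e x = x ^ 2 from rfl] at this; exact this

lemma tr_pow2 (t : ℕ) (x : F) :
    Algebra.trace (ZMod 2) F (x ^ (2 ^ t)) = Algebra.trace (ZMod 2) F x := by
  induction t with
  | zero => simp
  | succ t ih => rw [pow_succ, pow_mul, tr_sq, ih]

lemma tr_exists_one : ∃ x : F, Algebra.trace (ZMod 2) F x ≠ 0 := by
  haveI := charF (F := F)
  haveI : FiniteDimensional (ZMod 2) F := Module.Finite.of_finite
  have h := Algebra.trace_ne_zero (ZMod 2) F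
  by_contra hc
  push_neg at hc
  exact h (LinearMap.ext fun x => hc x)



lemma l_odd {l m : ℕ} (hl : l.Prime) (hm : 1 ≤ m)
    (h2 : orderOf (2 : ZMod (l ^ m)) = Nat.totient (l ^ m)) : Odd l := by
  haveI : NeZero (l ^ m) := ⟨pow_ne_zero m hl.ne_zero⟩
  have hpos : 0 < Nat.totient (l ^ m) := Nat.totient_pos.mpr (pow_pos hl.pos m)
  have hfin : IsOfFinOrder (2 : ZMod (l ^ m)) := by
    rw [← orderOf_pos_iff, h2]; exact hpos
  have hunit : IsUnit (2 : ZMod (l ^ m)) := hfin.isUnit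
  have hcop : Nat.Coprime 2 (l ^ m) := by
    rw [← ZMod.isUnit_iff_coprime]; exact_mod_cast hunit
  have hl2 : l ≠ 2 := by
    rintro rfl
    have hd : (2 : ℕ) ∣ 2 ^ m := dvd_pow_self 2 (by omega)
    rw [Nat.Coprime, Nat.gcd_eq_left hd] at hcop
    omega
  exact hl.odd_of_ne_two hl2

lemma lm_dvd {l m : ℕ} (hl : l.Prime)
    (h2 : orderOf (2 : ZMod (l ^ m)) = Nat.totient (l ^ m)) :
    l ^ m ∣ 2 ^ Nat.totient (l ^ m) - 1 := by
  haveI : NeZero (l ^ m) := ⟨pow_ne_zero m hl.ne_zero⟩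
  have h1 : (2 : ZMod (l ^ m)) ^ Nat.totient (l ^ m) = 1 := by
    rw [← h2]; exact pow_orderOf_eq_one _
  have : ((2 ^ Nat.totient (l ^ m) - 1 : ℕ) : ZMod (l ^ m)) = 0 := by
    have hle : 1 ≤ 2 ^ Nat.totient (l ^ m) := Nat.one_le_two_pow
    push_cast [Nat.cast_sub hle]
    rw [h1]; ring
  exact (ZMod.natCast_eq_zero_iff _ _).mp this

lemma order_alpha {F : Type*} [Field F] [Fintype F] (γ : F)
    (hγ : orderOf γ = Fintype.card F - 1) {N : ℕ} (hN : N ≠ 0)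
    (hdvd : N ∣ Fintype.card F - 1) :
    orderOf (γ ^ ((Fintype.card F - 1) / N)) = N := by
  have hq : Fintype.card F - 1 ≠ 0 := by
    have := Fintype.one_lt_card (α := F)
    omega
  have hpos : 0 < (Fintype.card F - 1) / N := Nat.div_pos (Nat.le_of_dvd (by omega) hdvd) (by omega)
  rw [orderOf_pow' _ (by omega), hγ, Nat.gcd_eq_right (Nat.div_dvd_of_dvd hdvd), Nat.div_div_self hdvd hq]




lemma exists_pow2_unit {l m : ℕ} (hl : l.Prime) (hm : 1 ≤ m)
    (h2 : orderOf (2 : ZMod (l ^ m)) = Nat.totient (l ^ m))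
    (v : (ZMod (l ^ m))ˣ) : ∃ t : ℕ, (v : ZMod (l ^ m)) = 2 ^ t := by
  haveI : NeZero (l ^ m) := ⟨pow_ne_zero m hl.ne_zero⟩
  have hpos : 0 < Nat.totient (l ^ m) := Nat.totient_pos.mpr (pow_pos hl.pos m)
  have hfin : IsOfFinOrder (2 : ZMod (l ^ m)) := by
    rw [← orderOf_pos_iff, h2]; exact hpos
  have hunit : IsUnit (2 : ZMod (l ^ m)) := hfin.isUnit
  set g := hunit.unit with hg
  have hog : orderOf g = Nat.totient (l ^ m) := by
    rw [← orderOf_units, hg, IsUnit.unit_spec]; exact h2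
  have hcard : Nat.card (ZMod (l ^ m))ˣ = Nat.totient (l ^ m) := by
    rw [Nat.card_eq_fintype_card, ZMod.card_units_eq_totient]
  have htop : Subgroup.zpowers g = ⊤ := by
    apply Subgroup.eq_top_of_card_eq
    rw [Nat.card_zpowers, hog, hcard]
  have hv : v ∈ Subgroup.zpowers g := htop ▸ Subgroup.mem_top v
  rw [← mem_powers_iff_mem_zpowers] at hv
  obtain ⟨t, ht⟩ := hv
  exact ⟨t, by rw [← ht]; push_cast [hg]; rw [IsUnit.unit_spec]⟩

lemma tr_transport {l m : ℕ} (hl : l.Prime) (hm : 1 ≤ m)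
    (h2 : orderOf (2 : ZMod (l ^ m)) = Nat.totient (l ^ m))
    {F : Type*} [Field F] [Fintype F] [Algebra (ZMod 2) F]
    (α : F) (hα : orderOf α = l ^ m)
    (s u u' : ℕ) (hs : s < m) (hu : ¬ l ∣ u) (hu' : ¬ l ∣ u') :
    Algebra.trace (ZMod 2) F (α ^ (l ^ s * u)) =
      Algebra.trace (ZMod 2) F (α ^ (l ^ s * u')) := by
  haveI : NeZero (l ^ m) := ⟨pow_ne_zero m hl.ne_zero⟩
  set r := m - s with hr
  haveI : NeZero (l ^ r) := ⟨pow_ne_zero r hl.ne_zero⟩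
  have hsr : l ^ s * l ^ r = l ^ m := by rw [← pow_add]; congr 1; omega
  have hdvd : l ^ r ∣ l ^ m := Dvd.intro_left _ hsr
  -- units mod l^r
  have cu : IsUnit ((u : ℕ) : ZMod (l ^ r)) := by
    rw [ZMod.isUnit_iff_coprime]
    exact Nat.Coprime.pow_right r ((Nat.Prime.coprime_iff_not_dvd hl).mpr hu).symm
  have cu' : IsUnit ((u' : ℕ) : ZMod (l ^ r)) := by
    rw [ZMod.isUnit_iff_coprime]
    exact Nat.Coprime.pow_right r ((Nat.Prime.coprime_iff_not_dvd hl).mpr hu').symm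
  obtain ⟨U, hU⟩ := ZMod.unitsMap_surjective hdvd cu.unit
  obtain ⟨U', hU'⟩ := ZMod.unitsMap_surjective hdvd cu'.unit
  -- U' * U⁻¹ is a power of 2
  obtain ⟨t, ht⟩ := exists_pow2_unit hl hm h2 (U' * U⁻¹)
  -- project to ZMod (l ^ r)
  have hproj : ((u' : ℕ) : ZMod (l ^ r)) = 2 ^ t * ((u : ℕ) : ZMod (l ^ r)) := by
    have h2' : ZMod.unitsMap hdvd U' = ZMod.unitsMap hdvd (U' * U⁻¹) * ZMod.unitsMap hdvd U := by
      rw [← map_mul]; congr 1; group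
    have h3 := congrArg (Units.val) h2'
    rw [hU, hU'] at h3
    simp only [IsUnit.unit_spec, Units.val_mul] at h3
    rw [h3]
    congr 1
    have : ((ZMod.unitsMap hdvd (U' * U⁻¹)) : ZMod (l ^ r))
        = ZMod.castHom hdvd (ZMod (l ^ r)) ((U' * U⁻¹ : (ZMod (l ^ m))ˣ) : ZMod (l ^ m)) := rfl
    rw [this, ht, map_pow]
    congr 1
    exact map_ofNat _ 2
  -- to ModEq
  have hmod : (l ^ s * u') ≡ (l ^ s * (2 ^ t * u)) [MOD l ^ m] := by
    rw [← hsr]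
    apply Nat.ModEq.mul_left'
    rw [← ZMod.natCast_eq_natCast_iff]
    push_cast
    exact hproj
  have hpow : α ^ (l ^ s * u') = α ^ (l ^ s * (2 ^ t * u)) := by
    rw [← pow_mod_orderOf α (l ^ s * u'), ← pow_mod_orderOf α (l ^ s * (2 ^ t * u)), hα]
    exact congrArg (α ^ ·) hmod
  calc Algebra.trace (ZMod 2) F (α ^ (l ^ s * u))
      = Algebra.trace (ZMod 2) F ((α ^ (l ^ s * u)) ^ 2 ^ t) := (tr_pow2 t _).symm
    _ = Algebra.trace (ZMod 2) F (α ^ (l ^ s * u')) := by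
        rw [← pow_mul, hpow]
        congr 2
        ring






lemma tr_val {l m : ℕ} (hl : l.Prime) (hm : 1 ≤ m)
    (h2 : orderOf (2 : ZMod (l ^ m)) = Nat.totient (l ^ m))
    {F : Type*} [Field F] [Fintype F] [Algebra (ZMod 2) F]
    (α : F) (hα : orderOf α = l ^ m)
    (B : Module.Basis (Fin (Nat.totient (l ^ m))) (ZMod 2) F)
    (hB : ∀ j : Fin (Nat.totient (l ^ m)), B j = α ^ ((j : ℕ) + 1)) (k : ℕ) :
    Algebra.trace (ZMod 2) F (α ^ k)
      = if l ^ (m - 1) ∣ k ∧ ¬ l ^ m ∣ k then 1 else 0 := by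
  have hlodd : Odd l := l_odd hl hm h2
  have hl1 : 1 < l := hl.one_lt
  have hl3 : 3 ≤ l := by
    rcases hlodd with ⟨w, hw⟩; omega
  have hl2ne : (l : ZMod 2) = 1 := by
    have : l ≡ 1 [MOD 2] := by
      rcases hlodd with ⟨w, hw⟩
      unfold Nat.ModEq; omega
    have := (ZMod.natCast_eq_natCast_iff l 1 2).mpr this
    simpa using this
  -- Tr 1 = 0
  have htone : Algebra.trace (ZMod 2) F (1 : F) = 0 := by
    have h1 : (1 : F) = algebraMap (ZMod 2) F 1 := by simp
    rw [h1, Algebra.trace_algebraMap]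
    have hfr : Module.finrank (ZMod 2) F = Nat.totient (l ^ m) := by
      rw [Module.finrank_eq_card_basis B, Fintype.card_fin]
    have heven : Even (Nat.totient (l ^ m)) := by
      apply Nat.totient_even
      calc 2 < l := by omega
        _ ≤ l ^ m := Nat.le_self_pow (by omega) l
    rw [hfr]
    have : (Nat.totient (l ^ m)) • (1 : ZMod 2) = ((Nat.totient (l ^ m) : ℕ) : ZMod 2) := by
      rw [nsmul_eq_mul, mul_one]
    rw [this, ZMod.natCast_eq_zero_iff]
    exact heven.two_dvd
  -- relation
  have hordβ : orderOf (α ^ (l ^ (m - 1))) = l := by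
    rw [orderOf_pow' _ (pow_ne_zero _ hl.ne_zero), hα]
    have hg : Nat.gcd (l ^ m) (l ^ (m - 1)) = l ^ (m - 1) :=
      Nat.gcd_eq_right (pow_dvd_pow l (by omega))
    rw [hg, Nat.pow_div (by omega) hl.pos, show m - (m - 1) = 1 by omega, pow_one]
  have hβne : (α ^ (l ^ (m - 1))) ≠ 1 := by
    intro h
    rw [h, orderOf_one] at hordβ
    omega
  have hgeom : ∑ j ∈ Finset.range l, (α ^ (l ^ (m - 1))) ^ j = 0 := by
    have hmul := geom_sum_mul (α ^ (l ^ (m - 1))) l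
    have hpl : (α ^ (l ^ (m - 1))) ^ l = 1 := by
      have := pow_orderOf_eq_one (α ^ l ^ (m - 1))
      rwa [hordβ] at this
    rw [hpl, sub_self] at hmul
    rcases mul_eq_zero.mp hmul with h | h
    · exact h
    · exact absurd (sub_eq_zero.mp h) hβne
  have hrel : ∀ k' : ℕ, ∑ j ∈ Finset.range l,
      Algebra.trace (ZMod 2) F (α ^ (k' + j * l ^ (m - 1))) = 0 := by
    intro k'
    have : ∑ j ∈ Finset.range l, α ^ (k' + j * l ^ (m - 1)) = 0 := by
      calc ∑ j ∈ Finset.range l, α ^ (k' + j * l ^ (m - 1))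
          = α ^ k' * ∑ j ∈ Finset.range l, (α ^ (l ^ (m - 1))) ^ j := by
            rw [Finset.mul_sum]
            exact Finset.sum_congr rfl fun j _ => by
              rw [← pow_mul, ← pow_add]
              congr 1
              ring
        _ = 0 := by rw [hgeom, mul_zero]
    calc ∑ j ∈ Finset.range l,
        Algebra.trace (ZMod 2) F (α ^ (k' + j * l ^ (m - 1)))
        = Algebra.trace (ZMod 2) F (∑ j ∈ Finset.range l, α ^ (k' + j * l ^ (m - 1))) :=
          (map_sum _ _ _).symm
      _ = 0 := by rw [this, map_zero]
  -- Claim B : multiples of l^m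
  have claimB : ∀ k' : ℕ, l ^ m ∣ k' → Algebra.trace (ZMod 2) F (α ^ k') = 0 := by
    intro k' hk'
    have : α ^ k' = 1 := orderOf_dvd_iff_pow_eq_one.mp (hα ▸ hk')
    rw [this, htone]
  -- Claim A : not multiples of l^(m-1)
  have claimA : ∀ k' : ℕ, ¬ l ^ (m - 1) ∣ k' → Algebra.trace (ZMod 2) F (α ^ k') = 0 := by
    intro k' hk'
    have hk0 : k' ≠ 0 := by rintro rfl; exact hk' (dvd_zero _)
    set s := k'.factorization l with hs
    have hsd : l ^ s ∣ k' := Nat.ordProj_dvd k' l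
    have hu : ¬ l ∣ k' / l ^ s := Nat.not_dvd_ordCompl hl hk0
    set u := k' / l ^ s with hudef
    have hk'eq : k' = l ^ s * u := by
      rw [hudef, Nat.mul_div_cancel' hsd]
    have hslt : s < m - 1 := by
      by_contra hge
      exact hk' (dvd_trans (pow_dvd_pow l (by omega)) hsd)
    -- each term of relation at l^s equals Tr (α ^ k')
    have hterm : ∀ j ∈ Finset.range l,
        Algebra.trace (ZMod 2) F (α ^ (l ^ s + j * l ^ (m - 1)))
          = Algebra.trace (ZMod 2) F (α ^ k') := by
      intro j _
      have hfact : l ^ s + j * l ^ (m - 1) = l ^ s * (1 + j * l ^ (m - 1 - s)) := by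
        rw [Nat.mul_add, mul_one]
        congr 1
        rw [← mul_assoc, mul_comm (l ^ s) j, mul_assoc, ← pow_add]
        congr 2
        omega
      rw [hfact, hk'eq]
      apply tr_transport hl hm h2 α hα s _ u (by omega)
      · intro hdvd
        have hj : l ∣ j * l ^ (m - 1 - s) := Dvd.dvd.mul_left (dvd_pow_self l (by omega)) j
        have h1 : l ∣ 1 := by
          have := Nat.dvd_sub hdvd hj
          simpa using this
        have := Nat.le_of_dvd one_pos h1
        omega
      · exact hu
    have := hrel (l ^ s)
    rw [Finset.sum_congr rfl hterm, Finset.sum_const, Finset.card_range] at this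
    rw [nsmul_eq_mul, hl2ne, one_mul] at this
    exact this
  -- Claim C : transport within the middle class
  have claimC : ∀ k₁ k₂ : ℕ, (l ^ (m - 1) ∣ k₁ ∧ ¬ l ^ m ∣ k₁) → (l ^ (m - 1) ∣ k₂ ∧ ¬ l ^ m ∣ k₂) →
      Algebra.trace (ZMod 2) F (α ^ k₁) = Algebra.trace (ZMod 2) F (α ^ k₂) := by
    have key : ∀ k' : ℕ, l ^ (m - 1) ∣ k' → ¬ l ^ m ∣ k' →
        ∃ u : ℕ, ¬ l ∣ u ∧ k' = l ^ (m - 1) * u := by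
      intro k' hd hnd
      refine ⟨k' / l ^ (m - 1), ?_, (Nat.mul_div_cancel' hd).symm⟩
      intro hldvd
      apply hnd
      obtain ⟨c, hc⟩ := hldvd
      have hk'' : k' = l ^ (m - 1) * (l * c) := by rw [← hc, Nat.mul_div_cancel' hd]
      refine ⟨c, ?_⟩
      have hlm : l ^ m = l ^ (m - 1) * l := by
        rw [← pow_succ]; congr 1; omega
      rw [hk'', hlm]
      ring
    intro k₁ k₂ ⟨h1, h2'⟩ ⟨h3, h4⟩
    obtain ⟨u₁, hu₁, he₁⟩ := key k₁ h1 h2'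
    obtain ⟨u₂, hu₂, he₂⟩ := key k₂ h3 h4
    rw [he₁, he₂]
    exact tr_transport hl hm h2 α hα (m - 1) u₁ u₂ (by omega) hu₁ hu₂
  -- Claim D : value on middle class is 1
  have claimD : Algebra.trace (ZMod 2) F (α ^ (l ^ (m - 1))) = 1 := by
    have hmid : l ^ (m - 1) ∣ l ^ (m - 1) ∧ ¬ l ^ m ∣ l ^ (m - 1) := by
      refine ⟨dvd_rfl, fun hdvd => ?_⟩
      have := Nat.le_of_dvd (pow_pos hl.pos _) hdvd
      have := Nat.pow_lt_pow_right hl.one_lt (show m - 1 < m by omega)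
      omega
    by_contra hne
    have h0 : Algebra.trace (ZMod 2) F (α ^ (l ^ (m - 1))) = 0 := by
      rcases (show ∀ u : ZMod 2, u = 0 ∨ u = 1 by decide)
        (Algebra.trace (ZMod 2) F (α ^ (l ^ (m - 1)))) with h | h
      · exact h
      · exact absurd h hne
    have hallzero : ∀ k' : ℕ, Algebra.trace (ZMod 2) F (α ^ k') = 0 := by
      intro k'
      by_cases hd1 : l ^ (m - 1) ∣ k'
      · by_cases hd2 : l ^ m ∣ k'
        · exact claimB k' hd2
        · rw [claimC k' (l ^ (m - 1)) ⟨hd1, hd2⟩ hmid]; exact h0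
      · exact claimA k' hd1
    obtain ⟨x, hx⟩ := tr_exists_one (F := F)
    apply hx
    have hxe : x = ∑ j, (B.repr x j) • B j := (B.sum_repr x).symm
    rw [hxe, map_sum]
    apply Finset.sum_eq_zero
    intro j _
    rw [map_smul, hB j, hallzero ((j : ℕ) + 1), smul_zero]
  by_cases hd1 : l ^ (m - 1) ∣ k
  · by_cases hd2 : l ^ m ∣ k
    · rw [if_neg (by tauto)]
      exact claimB k hd2
    · rw [if_pos ⟨hd1, hd2⟩]
      rw [claimC k (l ^ (m - 1)) ⟨hd1, hd2⟩ ?_]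
      · exact claimD
      · refine ⟨dvd_rfl, fun hdvd => ?_⟩
        have := Nat.le_of_dvd (pow_pos hl.pos _) hdvd
        have := Nat.pow_lt_pow_right hl.one_lt (show m - 1 < m by omega)
        omega
  · rw [if_neg (by tauto)]
    exact claimA k hd1


end Helpers

theorem stmt2 (l m : ℕ) (hl : l.Prime) (hm : 1 ≤ m)
    {F : Type*} [Field F] [Fintype F] [Algebra (ZMod 2) F]
    (hcard : Fintype.card F = 2 ^ Nat.totient (l ^ m))
    (h2 : orderOf (2 : ZMod (l ^ m)) = Nat.totient (l ^ m))
    (γ : F) (hγ : orderOf γ = Fintype.card F - 1)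
    (B : Module.Basis (Fin (Nat.totient (l ^ m))) (ZMod 2) F)
    (hB : ∀ j : Fin (Nat.totient (l ^ m)),
      B j = (γ ^ ((Fintype.card F - 1) / l ^ m)) ^ ((j : ℕ) + 1))
    (a : F) :
    Sa l m (γ ^ ((Fintype.card F - 1) / l ^ m)) a =
      ∑ i ∈ Finset.range (l ^ (m - 1)),
        (-1 : ℤ) ^ wtCoord l m B i a * ((l : ℤ) - 2 * (wtCoord l m B i a : ℤ)) := by
  classical
  have hlodd : Odd l := l_odd hl hm h2
  have hl3 : 3 ≤ l := by
    have := hl.two_le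
    rcases hlodd with ⟨w, hw⟩; omega
  set L := l ^ (m - 1) with hLdef
  set α := γ ^ ((Fintype.card F - 1) / l ^ m) with hαdef
  have hnval : (Nat.totient (l ^ m)) = L * (l - 1) := by
    rw [hLdef, Nat.totient_prime_pow hl (by omega)]
  have hLpos : 0 < L := pow_pos hl.pos _
  have hnpos : 0 < (Nat.totient (l ^ m)) := by
    rw [hnval]; exact Nat.mul_pos hLpos (by omega)
  have hdvd : l ^ m ∣ Fintype.card F - 1 := by
    rw [hcard]; exact lm_dvd hl h2
  have hαord : orderOf α = l ^ m := order_alpha γ hγ (pow_ne_zero m hl.ne_zero) hdvd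
  have trval := tr_val hl hm h2 α hαord B hB
  have hLl : L * l = l ^ m := by
    rw [hLdef, ← pow_succ]; congr 1; omega
  -- coordinates as a ℕ-indexed function
  set c : ℕ → ZMod 2 := fun t => if h : t < (Nat.totient (l ^ m)) then B.repr a ⟨t, h⟩ else 0 with hc
  -- trace expansion
  have hTrExp : ∀ s : ℕ, Algebra.trace (ZMod 2) F (a * α ^ s)
      = ∑ t ∈ Finset.range (Nat.totient (l ^ m)), c t *
          (if L ∣ (t + 1 + s) ∧ ¬ l ^ m ∣ (t + 1 + s) then 1 else 0) := by
    intro s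
    have ha : a = ∑ j : Fin (Nat.totient (l ^ m)), B.repr a j • B j := (B.sum_repr a).symm
    have hmul : a * α ^ s = ∑ j : Fin (Nat.totient (l ^ m)), B.repr a j • α ^ ((j : ℕ) + 1 + s) := by
      conv_lhs => rw [ha]
      rw [Finset.sum_mul]
      refine Finset.sum_congr rfl fun j _ => ?_
      rw [smul_mul_assoc, hB j, ← pow_add]
    rw [hmul, map_sum]
    have hterm : ∀ j : Fin (Nat.totient (l ^ m)),
        Algebra.trace (ZMod 2) F (B.repr a j • α ^ ((j : ℕ) + 1 + s))
          = c (j : ℕ) * (if L ∣ ((j : ℕ) + 1 + s) ∧ ¬ l ^ m ∣ ((j : ℕ) + 1 + s)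
              then 1 else 0) := by
      intro j
      rw [map_smul, smul_eq_mul, trval ((j : ℕ) + 1 + s)]
      congr 1
      rw [hc]
      simp only [j.isLt, dif_pos]
    rw [Finset.sum_congr rfl fun j _ => hterm j]
    exact Fin.sum_univ_eq_sum_range
      (fun t => c t * (if L ∣ (t + 1 + s) ∧ ¬ l ^ m ∣ (t + 1 + s) then 1 else 0)) (Nat.totient (l ^ m))
  -- reindex the full sum
  have hSa : Sa l m α a = ∑ i ∈ Finset.range L, ∑ j ∈ Finset.range l,
      chi (a * α ^ (i + j * L)) := by
    rw [Sa, ← Finset.sum_product']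
    apply Finset.sum_nbij' (i := fun t => (t % L, t / L))
      (j := fun p => p.1 + p.2 * L)
    · intro t ht
      simp only [Finset.mem_range] at ht
      simp only [Finset.mem_product, Finset.mem_range]
      constructor
      · exact Nat.mod_lt _ hLpos
      · apply Nat.div_lt_of_lt_mul
        rw [hLl]; exact ht
    · intro p hp
      simp only [Finset.mem_product, Finset.mem_range] at hp
      simp only [Finset.mem_range]
      obtain ⟨h1, h2'⟩ := hp
      have : p.1 + p.2 * L < L + (l - 1) * L := by
        have : p.2 * L ≤ (l - 1) * L := Nat.mul_le_mul_right L (by omega)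
        omega
      have hE : L + (l - 1) * L = l ^ m := by
        have h4 : l * L = (l - 1) * L + L := by
          calc l * L = ((l - 1) + 1) * L := by
                congr 1; omega
            _ = (l - 1) * L + 1 * L := Nat.add_mul _ _ _
            _ = (l - 1) * L + L := by rw [one_mul]
        have h6 : L * l = l * L := Nat.mul_comm _ _
        rw [← hLl]
        omega
      omega
    · intro t ht
      exact Nat.mod_add_div' t L
    · intro p hp
      simp only [Finset.mem_product, Finset.mem_range] at hp
      obtain ⟨h1, h2'⟩ := hp
      have e1 : (p.1 + p.2 * L) % L = p.1 := by
        rw [Nat.add_mul_mod_self_right, Nat.mod_eq_of_lt h1]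
      have e2 : (p.1 + p.2 * L) / L = p.2 := by
        rw [Nat.add_mul_div_right _ _ hLpos, Nat.div_eq_of_lt h1, zero_add]
      simp [e1, e2]
    · intro t ht
      rw [Nat.mod_add_div' t L]
  rw [hSa]
  refine Finset.sum_congr rfl fun i hi => ?_
  rw [Finset.mem_range] at hi
  -- now fix i < L
  set e : ℕ → ℕ := fun k => (k + 1) * L - i - 1 with he
  set g : ℕ → ZMod 2 := fun k => c (e k) with hg
  have heprop : ∀ k, k < l - 1 → e k < (Nat.totient (l ^ m)) ∧ e k + 1 + i = (k + 1) * L := by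
    intro k hk
    have h1 : L ≤ (k + 1) * L := Nat.le_mul_of_pos_left L (by omega)
    have h2' : (k + 1) * L ≤ (l - 1) * L := Nat.mul_le_mul_right L (by omega)
    have h3 : (Nat.totient (l ^ m)) = L * (l - 1) := hnval
    have h4 : (l - 1) * L = L * (l - 1) := mul_comm _ _
    have hek : e k = (k + 1) * L - i - 1 := rfl
    omega
  -- inner trace values
  have hTrInner : ∀ j, j < l → Algebra.trace (ZMod 2) F (a * α ^ (i + j * L))
      = ∑ k ∈ Finset.range (l - 1), (if l ∣ (k + 1 + j) then 0 else g k) := by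
    intro j hj
    rw [hTrExp (i + j * L)]
    -- restrict to the image of e
    have hsub : (Finset.range (l - 1)).image e ⊆ Finset.range (Nat.totient (l ^ m)) := by
      intro t ht
      simp only [Finset.mem_image, Finset.mem_range] at ht ⊢
      obtain ⟨k, hk, rfl⟩ := ht
      exact (heprop k hk).1
    have hzero : ∀ t ∈ Finset.range (Nat.totient (l ^ m)), t ∉ (Finset.range (l - 1)).image e →
        c t * (if L ∣ (t + 1 + (i + j * L)) ∧ ¬ l ^ m ∣ (t + 1 + (i + j * L))
          then 1 else 0) = 0 := by
      intro t ht hnot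
      rw [Finset.mem_range] at ht
      rw [if_neg, mul_zero]
      rintro ⟨hdvd1, -⟩
      have hdvd2 : L ∣ (t + 1 + i) := by
        have : L ∣ j * L := Dvd.intro_left j rfl
        have h' : t + 1 + (i + j * L) = (t + 1 + i) + j * L := by ring
        rw [h'] at hdvd1
        exact (Nat.dvd_add_right this).mp (by rwa [Nat.add_comm] at hdvd1)
      obtain ⟨d, hd⟩ := hdvd2
      have hd1 : 1 ≤ d := by
        rcases Nat.eq_zero_or_pos d with h0 | h1
        · rw [h0, mul_zero] at hd; omega
        · exact h1
      have hdl : d ≤ l - 1 := by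
        by_contra hgt
        have h6 : L * l ≤ L * d := Nat.mul_le_mul_left L (by omega)
        have hnn : (Nat.totient (l ^ m)) = L * (l - 1) := hnval
        have h7 : L * l = L * (l - 1) + L := by
          calc L * l = L * ((l - 1) + 1) := by congr 1; omega
            _ = L * (l - 1) + L * 1 := Nat.mul_add _ _ _
            _ = L * (l - 1) + L := by rw [Nat.mul_one]
        omega
      apply hnot
      simp only [Finset.mem_image, Finset.mem_range]
      refine ⟨d - 1, by omega, ?_⟩
      show (d - 1 + 1) * L - i - 1 = t
      have h8 : d - 1 + 1 = d := by omega
      rw [h8]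
      have h9 : d * L = L * d := Nat.mul_comm _ _
      omega
    rw [← Finset.sum_subset hsub hzero]
    have hinj : ∀ x ∈ Finset.range (l - 1), ∀ y ∈ Finset.range (l - 1),
        e x = e y → x = y := by
      intro x hx y hy hxy
      rw [Finset.mem_range] at hx hy
      have h1 := (heprop x hx).2
      have h2' := (heprop y hy).2
      have : (x + 1) * L = (y + 1) * L := by omega
      have := Nat.eq_of_mul_eq_mul_right hLpos this
      omega
    rw [Finset.sum_image hinj]
    refine Finset.sum_congr rfl fun k hk => ?_
    rw [Finset.mem_range] at hk
    have h1 := (heprop k hk).2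
    have harg : e k + 1 + (i + j * L) = (k + 1 + j) * L := by
      have h2' : (k + 1 + j) * L = (k + 1) * L + j * L := by ring
      omega
    rw [harg]
    have hdvd1 : L ∣ (k + 1 + j) * L := dvd_mul_left L (k + 1 + j)
    have hdvd2 : l ^ m ∣ (k + 1 + j) * L ↔ l ∣ (k + 1 + j) := by
      rw [← hLl]
      constructor
      · rintro ⟨d, hd⟩
        refine ⟨d, ?_⟩
        have : (k + 1 + j) * L = (l * d) * L := by
          rw [hd]; ring
        exact Nat.eq_of_mul_eq_mul_right hLpos this
      · rintro ⟨d, hd⟩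
        exact ⟨d, by rw [hd]; ring⟩
    by_cases hld : l ∣ (k + 1 + j)
    · rw [if_pos hld, if_neg, mul_zero]
      rw [not_and, not_not]
      intro
      exact hdvd2.mpr hld
    · rw [if_neg hld, if_pos ⟨hdvd1, fun hcon => hld (hdvd2.mp hcon)⟩, mul_one]
  -- evaluate the inner trace sums
  set W : ZMod 2 := ∑ k ∈ Finset.range (l - 1), g k with hW
  have hD0 : Algebra.trace (ZMod 2) F (a * α ^ (i + 0 * L)) = W := by
    rw [hTrInner 0 (by omega), hW]
    refine Finset.sum_congr rfl fun k hk => ?_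
    rw [Finset.mem_range] at hk
    rw [if_neg]
    intro hdvd'
    have := Nat.le_of_dvd (by omega) hdvd'
    omega
  have hDj : ∀ j, 1 ≤ j → j < l →
      Algebra.trace (ZMod 2) F (a * α ^ (i + j * L)) = W + g (l - 1 - j) := by
    intro j hj1 hjl
    rw [hTrInner j hjl]
    have hiff : ∀ k, k < l - 1 → (l ∣ (k + 1 + j) ↔ k = l - 1 - j) := by
      intro k hk
      constructor
      · rintro ⟨d, hd⟩
        have hd1 : 1 ≤ d := by
          rcases Nat.eq_zero_or_pos d with h0 | h1
          · rw [h0, mul_zero] at hd; omega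
          · exact h1
        have hd2 : d < 2 := by
          by_contra hge
          have : l * 2 ≤ l * d := Nat.mul_le_mul_left l (by omega)
          omega
        have : d = 1 := by omega
        rw [this, mul_one] at hd
        omega
      · intro hkeq
        refine ⟨1, ?_⟩
        omega
    calc ∑ k ∈ Finset.range (l - 1), (if l ∣ (k + 1 + j) then 0 else g k)
        = ∑ k ∈ Finset.range (l - 1), (g k + if k = l - 1 - j then g k else 0) := by
          refine Finset.sum_congr rfl fun k hk => ?_
          rw [Finset.mem_range] at hk
          by_cases hcase : k = l - 1 - j
          · rw [if_pos ((hiff k hk).mpr hcase), if_pos hcase]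
            have : ∀ u : ZMod 2, (0 : ZMod 2) = u + u := by decide
            exact this (g k)
          · rw [if_neg (fun h => hcase ((hiff k hk).mp h)), if_neg hcase, add_zero]
      _ = W + g (l - 1 - j) := by
          rw [Finset.sum_add_distrib, ← hW, Finset.sum_ite_eq' (Finset.range (l - 1))]
          rw [if_pos (Finset.mem_range.mpr (by omega))]
  -- the weight
  set w : ℕ := ((Finset.range (l - 1)).filter (fun k => g k = 1)).card with hw
  have hWval : e2 W = (-1 : ℤ) ^ w := by
    rw [hW, e2_sum, e2_prod, hw]
  have hwt : wtCoord l m B i a = w := by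
    rw [wtCoord, hw]
    have : {k : ℕ | k < l - 1 ∧ ∃ h : (k + 1) * l ^ (m - 1) - i - 1 < Nat.totient (l ^ m),
        B.repr a ⟨(k + 1) * l ^ (m - 1) - i - 1, h⟩ = 1}
        = ↑((Finset.range (l - 1)).filter (fun k => g k = 1)) := by
      ext k
      simp only [Set.mem_setOf_eq, Finset.coe_filter, Finset.mem_range, Set.mem_setOf_eq]
      constructor
      · rintro ⟨hk, h, hrepr⟩
        refine ⟨hk, ?_⟩
        rw [hg, hc, he]
        exact (dif_pos h).trans hrepr
      · rintro ⟨hk, hgk⟩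
        refine ⟨hk, (heprop k hk).1, ?_⟩
        rw [hg, hc, he] at hgk
        exact (dif_pos ((heprop k hk).1)).symm.trans hgk
    rw [this, Set.ncard_coe_finset]
  rw [hwt]
  -- final computation
  have hsum : ∑ j ∈ Finset.range l, chi (a * α ^ (i + j * L))
      = e2 W + ∑ j ∈ Finset.range (l - 1), e2 (W + g (l - 1 - (j + 1))) := by
    have hl' : l = (l - 1) + 1 := by omega
    rw [hl', Finset.sum_range_succ']
    rw [← hl']
    have h0 : chi (a * α ^ (i + 0 * L)) = e2 W := by
      show e2 _ = e2 W
      rw [hD0]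
    rw [h0, add_comm]
    congr 1
    refine Finset.sum_congr rfl fun j hj => ?_
    rw [Finset.mem_range] at hj
    show e2 _ = _
    rw [hDj (j + 1) (by omega) (by omega)]
  rw [hsum]
  have hrefl : ∑ j ∈ Finset.range (l - 1), e2 (W + g (l - 1 - (j + 1)))
      = ∑ k ∈ Finset.range (l - 1), e2 (W + g k) := by
    have := Finset.sum_range_reflect (fun k => e2 (W + g k)) (l - 1)
    rw [← this]
    refine Finset.sum_congr rfl fun j hj => ?_
    rw [Finset.mem_range] at hj
    have harg : l - 1 - 1 - j = l - 1 - (j + 1) := by omega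
    rw [harg]
  rw [hrefl]
  have hsplit2 : ∑ k ∈ Finset.range (l - 1), e2 (W + g k)
      = e2 W * ((l - 1 : ℤ) - 2 * w) := by
    calc ∑ k ∈ Finset.range (l - 1), e2 (W + g k)
        = ∑ k ∈ Finset.range (l - 1), e2 W * e2 (g k) := by
          refine Finset.sum_congr rfl fun k _ => e2_add _ _
      _ = e2 W * ∑ k ∈ Finset.range (l - 1), e2 (g k) := by
          rw [Finset.mul_sum]
      _ = e2 W * ((l - 1 : ℤ) - 2 * w) := by
          rw [e2_sumval, Finset.card_range, hw]
          congr 2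
          push_cast [Nat.cast_sub (show 1 ≤ l by omega)]
          ring
  rw [hsplit2, hWval]
  push_cast [Nat.cast_sub (show 1 ≤ l by omega)]
  ring

end Paper
end
end

section
/- The set of values {S(a) : a ∈ F_q^*} is exactly {l^m − 4j : j = 1, 2, …, l^{m−1}(l−1)/2}. -/
open scoped BigOperators

noncomputable section

namespace Paper

/-- auxiliary lemmas -/
lemma sum_range_two_mul' {A : Type*} [AddCommMonoid A] (h : ℕ) (g : ℕ → A) :
    ∑ c ∈ Finset.range (2 * h), g c
      = ∑ s ∈ Finset.range h, (g (2 * s) + g (2 * s + 1)) := by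
  induction h with
  | zero => simp
  | succ h ih =>
    rw [Nat.mul_succ, Finset.sum_range_add, ih,
      Finset.sum_range_succ (fun s => g (2 * s) + g (2 * s + 1)) h]
    congr 1
    rw [Finset.sum_range_succ, Finset.sum_range_one]
    norm_num

lemma sum_range_mul'' {A : Type*} [AddCommMonoid A] (f : ℕ → A) (M h : ℕ) :
    ∑ t ∈ Finset.range (M * h), f t
      = ∑ s ∈ Finset.range h, ∑ r ∈ Finset.range M, f (M * s + r) := by
  induction h with
  | zero => simp
  | succ h ih => rw [Nat.mul_succ, Finset.sum_range_add, ih, Finset.sum_range_succ]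

def phiMap (N : ℕ) {F : Type*} [Field F] [Fintype F] [Algebra (ZMod 2) F] (α : F) :
    F →ₗ[ZMod 2] (Fin N → ZMod 2) :=
  LinearMap.pi fun i =>
    (Algebra.trace (ZMod 2) F).comp (LinearMap.mulRight (ZMod 2) (α ^ (i : ℕ)))

lemma phiMap_apply (N : ℕ) {F : Type*} [Field F] [Fintype F] [Algebra (ZMod 2) F]
    (α a : F) (i : Fin N) :
    phiMap N α a i = Algebra.trace (ZMod 2) F (a * α ^ (i : ℕ)) := rfl

def psiMap (N M l : ℕ) (hN : 0 < N) : (Fin N → ZMod 2) →ₗ[ZMod 2] (Fin M → ZMod 2) :=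
  LinearMap.pi fun r => ∑ c ∈ Finset.range l,
    LinearMap.proj (⟨((r : ℕ) + c * M) % N, Nat.mod_lt _ hN⟩ : Fin N)

def uOf {N : ℕ} (hN : 0 < N) (v : Fin N → ZMod 2) (i : ℕ) : ZMod 2 :=
  v ⟨i % N, Nat.mod_lt _ hN⟩

lemma psi_comp (N M l : ℕ) (hN : 0 < N) (v : Fin N → ZMod 2) (r : Fin M) :
    psiMap N M l hN v r = ∑ c ∈ Finset.range l, uOf hN v ((r : ℕ) + c * M) := by
  simp [psiMap, uOf]

lemma wt_eq (N M l : ℕ) (hN : 0 < N) (hMl : M * l = N) (v : Fin N → ZMod 2) :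
    (Finset.univ.filter fun i => v i ≠ 0).card
      = ∑ r ∈ Finset.range M, ∑ c ∈ Finset.range l,
          (if uOf hN v (r + c * M) ≠ 0 then 1 else 0) := by
  rw [Finset.card_filter]
  have h1 : ∀ i : Fin N,
      (if v i ≠ 0 then 1 else 0)
        = (fun t => if uOf hN v t ≠ 0 then 1 else 0) (i : ℕ) := by
    intro i
    have hfin : (⟨(i : ℕ) % N, Nat.mod_lt _ hN⟩ : Fin N) = i :=
      Fin.ext (Nat.mod_eq_of_lt i.isLt)
    simp only [uOf, hfin]
  rw [Finset.sum_congr rfl (fun i _ => h1 i),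
    Fin.sum_univ_eq_sum_range (fun t => if uOf hN v t ≠ 0 then 1 else 0) N]
  have hmul := sum_range_mul'' (fun t => if uOf hN v t ≠ 0 then 1 else 0) M l
  rw [hMl] at hmul
  rw [hmul, Finset.sum_comm]
  refine Finset.sum_congr rfl fun r _ => Finset.sum_congr rfl fun c _ => ?_
  rw [Nat.mul_comm, Nat.add_comm]

lemma wt_parity (N M l : ℕ) (hN : 0 < N) (hMl : M * l = N) (v : Fin N → ZMod 2)
    (hv : psiMap N M l hN v = 0) :
    2 ∣ (Finset.univ.filter fun i => v i ≠ 0).card := by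
  have h0 : (((Finset.univ.filter fun i => v i ≠ 0).card : ℕ) : ZMod 2) = 0 := by
    rw [wt_eq N M l hN hMl v]
    push_cast
    have hx : ∀ x : ZMod 2, (if x ≠ 0 then (1 : ZMod 2) else 0) = x := by decide
    calc (∑ r ∈ Finset.range M, ∑ c ∈ Finset.range l,
            (if uOf hN v (r + c * M) ≠ 0 then (1 : ZMod 2) else 0))
        = ∑ r ∈ Finset.range M, ∑ c ∈ Finset.range l, uOf hN v (r + c * M) := by
          exact Finset.sum_congr rfl fun r _ => Finset.sum_congr rfl fun c _ => hx _
      _ = 0 := by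
          refine Finset.sum_eq_zero fun r hr => ?_
          have := psi_comp N M l hN v ⟨r, Finset.mem_range.mp hr⟩
          rw [hv] at this
          simpa using this.symm
  exact (ZMod.natCast_eq_zero_iff _ 2).mp h0

lemma wt_le (N M l : ℕ) (hN : 0 < N) (hMl : M * l = N) (hl0 : 0 < l)
    (hlcast : ((l : ℕ) : ZMod 2) = 1) (v : Fin N → ZMod 2)
    (hv : psiMap N M l hN v = 0) :
    (Finset.univ.filter fun i => v i ≠ 0).card ≤ M * (l - 1) := by
  rw [wt_eq N M l hN hMl v]
  have hbound : ∀ r ∈ Finset.range M,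
      (∑ c ∈ Finset.range l, if uOf hN v (r + c * M) ≠ 0 then 1 else 0) ≤ l - 1 := by
    intro r hr
    by_contra hcon
    push_neg at hcon
    have hall : ∀ c ∈ Finset.range l, uOf hN v (r + c * M) ≠ 0 := by
      intro c hc h0
      have hlt : (∑ c ∈ Finset.range l, if uOf hN v (r + c * M) ≠ 0 then 1 else 0)
          < ∑ _c ∈ Finset.range l, 1 := by
        refine Finset.sum_lt_sum (fun i _ => by split <;> omega) ⟨c, hc, ?_⟩
        rw [if_neg (by simpa using h0)]
        norm_num
      simp only [Finset.sum_const, Finset.card_range, smul_eq_mul, mul_one] at hlt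
      omega
    have hone : ∀ x : ZMod 2, x ≠ 0 → x = 1 := by decide
    have hpsi := psi_comp N M l hN v ⟨r, Finset.mem_range.mp hr⟩
    rw [hv] at hpsi
    have : (0 : ZMod 2) = (l : ZMod 2) := by
      rw [show ((0 : Fin M → ZMod 2) ⟨r, Finset.mem_range.mp hr⟩) = 0 from rfl] at hpsi
      rw [hpsi]
      rw [Finset.sum_congr rfl (fun c hc => hone _ (hall c hc))]
      simp
    rw [hlcast] at this
    exact one_ne_zero this.symm
  calc (∑ r ∈ Finset.range M, ∑ c ∈ Finset.range l,
          if uOf hN v (r + c * M) ≠ 0 then 1 else 0)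
      ≤ ∑ _r ∈ Finset.range M, (l - 1) := Finset.sum_le_sum hbound
    _ = M * (l - 1) := by simp [Finset.sum_const, mul_comm]


theorem stmt3 (l m : ℕ) (hl : l.Prime) (hm : 1 ≤ m)
    {F : Type*} [Field F] [Fintype F] [Algebra (ZMod 2) F]
    (hcard : Fintype.card F = 2 ^ Nat.totient (l ^ m))
    (h2 : orderOf (2 : ZMod (l ^ m)) = Nat.totient (l ^ m))
    (γ : F) (hγ : orderOf γ = Fintype.card F - 1) :
    {s : ℤ | ∃ a : F, a ≠ 0 ∧ Sa l m (γ ^ ((Fintype.card F - 1) / l ^ m)) a = s} =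
      {s : ℤ | ∃ j : ℕ, 1 ≤ j ∧ j ≤ l ^ (m - 1) * (l - 1) / 2 ∧ s = (l : ℤ) ^ m - 4 * j} := by
  have hSaDef : ∀ b : F, Sa l m (γ ^ ((Fintype.card F - 1) / l ^ m)) b
      = ∑ i ∈ Finset.range (l ^ m), chi (b * (γ ^ ((Fintype.card F - 1) / l ^ m)) ^ i) := fun b => rfl
  set n := Nat.totient (l ^ m) with hndef
  set N := l ^ m with hNdef
  set M := l ^ (m - 1) with hMdef
  set α := γ ^ ((Fintype.card F - 1) / N) with hαdef
  have hl2 : 2 ≤ l := hl.two_le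
  have hNpos : 0 < N := by positivity
  have hnpos : 0 < n := Nat.totient_pos.mpr hNpos
  have h2pow : (2 : ZMod N) ^ n = 1 := by rw [← h2]; exact pow_orderOf_eq_one _
  have hlne2 : l ≠ 2 := by
    rintro rfl
    have hu : IsUnit (2 : ZMod N) := IsUnit.of_pow_eq_one h2pow hnpos.ne'
    have hu2 : IsUnit ((2 : ℕ) : ZMod N) := by simpa using hu
    rw [ZMod.isUnit_iff_coprime] at hu2
    have h2d : (2 : ℕ) ∣ N := by rw [hNdef]; exact dvd_pow_self 2 (by omega)
    have h1 := Nat.eq_one_of_dvd_coprimes hu2 (dvd_refl 2) h2d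
    omega
  have hlodd : Odd l := hl.odd_of_ne_two hlne2
  have hlcast : ((l : ℕ) : ZMod 2) = 1 := by
    rw [← ZMod.natCast_mod l 2, Nat.odd_iff.mp hlodd]; rfl
  have h2dvd : 2 ∣ l - 1 := by obtain ⟨k, hk⟩ := hlodd; omega
  have hMl : M * l = N := by
    rw [hMdef, hNdef, ← pow_succ]
    congr 1
    omega
  have hMpos : 0 < M := by positivity
  have hMltN : M < N := by
    have h1 : M * 1 < M * l := Nat.mul_lt_mul_of_le_of_lt (le_refl M) (by omega) hMpos
    omega

  have hnval : n = M * (l - 1) := by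
    rw [hndef, hMdef, Nat.totient_prime_pow hl (by omega)]
  have hq2 : 2 ≤ Fintype.card F := Fintype.one_lt_card
  have hNdvd : N ∣ Fintype.card F - 1 := by
    have hc : ((2 ^ n - 1 : ℕ) : ZMod N) = 0 := by
      have h1 : (1 : ℕ) ≤ 2 ^ n := Nat.one_le_two_pow
      rw [Nat.cast_sub h1]
      push_cast
      rw [h2pow]
      ring
    rw [ZMod.natCast_eq_zero_iff] at hc
    rw [hcard]
    exact hc
  have hcard1pos : 0 < Fintype.card F - 1 := by omega
  have hαord : orderOf α = N := by
    rw [hαdef, orderOf_pow' γ ?_, hγ, Nat.gcd_eq_right (Nat.div_dvd_of_dvd hNdvd),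
      Nat.div_div_self hNdvd (by omega)]
    have : 0 < (Fintype.card F - 1) / N := Nat.div_pos (Nat.le_of_dvd hcard1pos hNdvd) hNpos
    omega
  have hαN : α ^ N = 1 := by rw [← hαord]; exact pow_orderOf_eq_one α
  have hζl : (α ^ M) ^ l = 1 := by rw [← pow_mul, hMl, hαN]
  have hζne : α ^ M ≠ 1 := by
    intro h1
    have := Nat.le_of_dvd hMpos (hαord ▸ orderOf_dvd_of_pow_eq_one h1)
    omega
  have hgeom : ∑ c ∈ Finset.range l, (α ^ M) ^ c = 0 := by
    rw [geom_sum_eq hζne, hζl, sub_self, zero_div]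
  have hfinrank : Module.finrank (ZMod 2) F = n := by
    have := Module.card_eq_pow_finrank (K := ZMod 2) (V := F)
    rw [ZMod.card, hcard] at this
    exact (Nat.pow_right_injective (le_refl 2) this.symm)
  -- injectivity of the trace-evaluation map
  have hΦker : ∀ a : F, (∀ i : Fin N, Algebra.trace (ZMod 2) F (a * α ^ (i : ℕ)) = 0) → a = 0 := by
    intro a htr
    have hadj : (Algebra.adjoin (ZMod 2) ({α} : Set F)) = ⊤ := by
      set K := Algebra.adjoin (ZMod 2) ({α} : Set F) with hK
      letI : Fintype K := Fintype.ofFinite _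
      have hKfield : IsField K := Subalgebra.isField_of_algebraic K
      letI := hKfield.toField
      have hcardK : Fintype.card K = 2 ^ Module.finrank (ZMod 2) K := by
        have := Module.card_eq_pow_finrank (K := ZMod 2) (V := K)
        rwa [ZMod.card] at this
      set d := Module.finrank (ZMod 2) K with hd
      set αK : K := ⟨α, Algebra.self_mem_adjoin_singleton _ α⟩ with hαK
      have hα0 : α ≠ 0 := by
        intro h0
        rw [h0, zero_pow hNpos.ne'] at hαN
        exact zero_ne_one hαN
      have hαK0 : αK ≠ 0 := by
        intro h0
        exact hα0 (congrArg Subtype.val h0)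
      have hpow : αK ^ (Fintype.card K - 1) = 1 := FiniteField.pow_card_sub_one_eq_one αK hαK0
      have hpow' : α ^ (Fintype.card K - 1) = 1 := by
        have := congrArg Subtype.val hpow
        simpa using this
      have hNd : N ∣ Fintype.card K - 1 := hαord ▸ orderOf_dvd_of_pow_eq_one hpow'
      rw [hcardK] at hNd
      have h2d : (2 : ZMod N) ^ d = 1 := by
        have hc : ((2 ^ d - 1 : ℕ) : ZMod N) = 0 :=
          (ZMod.natCast_eq_zero_iff _ _).mpr hNd
        have h1 : (1 : ℕ) ≤ 2 ^ d := Nat.one_le_two_pow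
        rw [Nat.cast_sub h1] at hc
        push_cast at hc
        linear_combination hc
      have hnd : n ∣ d := by rw [← h2]; exact orderOf_dvd_of_pow_eq_one h2d
      have hd_le : d ≤ n := by
        have hle := Submodule.finrank_le (Subalgebra.toSubmodule K)
        rw [hfinrank] at hle
        exact hle
      have hdpos : 0 < d := Module.finrank_pos
      have hdn : d = n := le_antisymm hd_le (Nat.le_of_dvd hdpos hnd)
      have htop : Subalgebra.toSubmodule K = ⊤ := by
        apply Submodule.eq_top_of_finrank_eq
        rw [hfinrank, ← hdn]
        exact hd.symm
      exact Algebra.toSubmodule_eq_top.mp htop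
    have hspan : Submodule.span (ZMod 2) (Set.range fun i : Fin N => α ^ (i : ℕ)) = ⊤ := by
      rw [eq_top_iff]
      have h1 : Submodule.span (ZMod 2) ((Submonoid.closure ({α} : Set F) : Submonoid F) : Set F)
          = ⊤ := by
        rw [← Algebra.adjoin_eq_span, hadj]
        exact Algebra.top_toSubmodule
      rw [← h1]
      apply Submodule.span_le.mpr
      intro x hx
      obtain ⟨k, hk⟩ := Submonoid.mem_closure_singleton.mp hx
      have hxk : x = α ^ (k % N) := by
        rw [← hk]
        conv_lhs => rw [show k = N * (k / N) + k % N from (Nat.div_add_mod k N).symm]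
        rw [pow_add, pow_mul, hαN, one_pow, one_mul]
      rw [hxk]
      apply Submodule.subset_span
      exact ⟨⟨k % N, Nat.mod_lt _ hNpos⟩, rfl⟩
    have hnondeg := traceForm_nondegenerate (ZMod 2) F
    apply hnondeg.1 a
    intro x
    have hzero : ((Algebra.traceForm (ZMod 2) F) a) = 0 := by
      apply LinearMap.ext_on hspan
      rintro y ⟨i, rfl⟩
      rw [Algebra.traceForm_apply]
      simpa using htr i
    rw [hzero]
    rfl
  -- the linear maps
  set Φ := phiMap N α with hΦdef
  set Ψ := psiMap N M l hNpos with hΨdef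
  have hΦinj : Function.Injective Φ := by
    rw [← LinearMap.ker_eq_bot (M := F)]
    apply LinearMap.ker_eq_bot'.mpr
    intro a ha
    apply hΦker a
    intro i
    have := congrFun ha i
    rwa [hΦdef, phiMap_apply] at this
  have hlt' : ∀ r c : ℕ, r < M → c < l → r + c * M < N := by
    intro r c hr hc
    have h1 : (c + 1) * M ≤ l * M := Nat.mul_le_mul_right M (by omega)
    have h2 : l * M = N := by rw [mul_comm]; exact hMl
    have h3 : (c + 1) * M = c * M + M := by ring
    omega
  have hΨsurj : Function.Surjective Ψ := by
    intro w
    refine ⟨fun i => if h : (i : ℕ) < M then w ⟨(i : ℕ), h⟩ else 0, ?_⟩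
    funext r
    rw [hΨdef]
    rw [show (psiMap N M l hNpos) (fun i => if h : (i : ℕ) < M then w ⟨(i : ℕ), h⟩ else 0) r
        = ∑ c ∈ Finset.range l, uOf hNpos (fun i => if h : (i : ℕ) < M then w ⟨(i : ℕ), h⟩ else 0)
            ((r : ℕ) + c * M) from psi_comp N M l hNpos _ r]
    rw [Finset.sum_eq_single_of_mem 0 (Finset.mem_range.mpr (by omega))]
    · have hrN : (r : ℕ) + 0 * M < N := by
        have := r.isLt
        omega
      simp only [uOf, Nat.mod_eq_of_lt hrN]
      have hrM : ((r : ℕ) + 0 * M) < M := by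
        have := r.isLt
        omega
      rw [dif_pos hrM]
      congr 1
      apply Fin.ext
      simp
    · intro c hc hc0
      have hcl : c < l := Finset.mem_range.mp hc
      have hrN : (r : ℕ) + c * M < N := hlt' r c r.isLt hcl
      simp only [uOf, Nat.mod_eq_of_lt hrN]
      rw [dif_neg]
      have h1 : 1 * M ≤ c * M := Nat.mul_le_mul_right M (by omega)
      omega
  have hrange : LinearMap.range Φ = LinearMap.ker Ψ := by
    have hle : LinearMap.range Φ ≤ LinearMap.ker Ψ := by
      rintro - ⟨a, rfl⟩
      rw [LinearMap.mem_ker, hΨdef, hΦdef]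
      funext r
      rw [show (psiMap N M l hNpos) (phiMap N α a) r
          = ∑ c ∈ Finset.range l, uOf hNpos (phiMap N α a) ((r : ℕ) + c * M) from
        psi_comp N M l hNpos _ r]
      have hterm : ∀ c ∈ Finset.range l,
          uOf hNpos (phiMap N α a) ((r : ℕ) + c * M)
            = Algebra.trace (ZMod 2) F ((a * α ^ (r : ℕ)) * (α ^ M) ^ c) := by
        intro c hc
        have hcl : c < l := Finset.mem_range.mp hc
        have hrN : (r : ℕ) + c * M < N := hlt' r c r.isLt hcl
        simp only [uOf, phiMap_apply]
        rw [Nat.mod_eq_of_lt hrN]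
        congr 1
        rw [pow_add, pow_mul]
        ring
      rw [Finset.sum_congr rfl hterm, ← map_sum, ← Finset.mul_sum, hgeom, mul_zero, map_zero]
      rfl
    refine Submodule.eq_of_le_of_finrank_le hle ?_
    have hkerfr : Module.finrank (ZMod 2) (LinearMap.ker Ψ) = n := by
      have hrn := LinearMap.finrank_range_add_finrank_ker Ψ
      rw [LinearMap.range_eq_top.mpr hΨsurj, finrank_top, Module.finrank_pi, Module.finrank_pi,
        Fintype.card_fin, Fintype.card_fin] at hrn
      have hNM : M + n = N := by
        obtain ⟨l', rfl⟩ : ∃ l', l = l' + 1 := ⟨l - 1, by omega⟩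
        have hfl : M * (l' + 1) = M * l' + M := by ring
        simp only [Nat.add_sub_cancel] at hnval
        omega
      omega
    rw [hkerfr, LinearMap.finrank_range_of_inj hΦinj, hfinrank]
  -- the sum formula
  have hSa : ∀ b : F, (∑ i ∈ Finset.range N, chi (b * α ^ i))
      = (N : ℤ) - 2 * ((Finset.univ.filter fun i : Fin N => Φ b i ≠ 0).card : ℤ) := by
    intro b
    have hchi : ∀ x : F, chi x
        = 1 - 2 * (if Algebra.trace (ZMod 2) F x ≠ 0 then (1 : ℤ) else 0) := by
      intro x
      by_cases hx : Algebra.trace (ZMod 2) F x = 0 <;> simp [chi, hx] <;> ring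
    have hcountN : (Finset.univ.filter fun i : Fin N => Φ b i ≠ 0).card
        = ∑ i ∈ Finset.range N,
            (if Algebra.trace (ZMod 2) F (b * α ^ i) ≠ 0 then (1:ℕ) else 0) := by
      rw [Finset.card_filter,
        ← Fin.sum_univ_eq_sum_range
          (fun i => if Algebra.trace (ZMod 2) F (b * α ^ i) ≠ 0 then (1:ℕ) else 0) N]
      refine Finset.sum_congr rfl fun i _ => ?_
      rw [hΦdef, phiMap_apply]
    rw [Finset.sum_congr rfl fun i _ => hchi (b * α ^ i), Finset.sum_sub_distrib,
      ← Finset.mul_sum, Finset.sum_const, Finset.card_range, hcountN]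
    rw [hNdef]
    push_cast
    ring
  clear hΦker
  -- final set equality
  ext s
  simp only [Set.mem_setOf_eq]
  constructor
  · rintro ⟨a, ha0, rfl⟩
    have hvker : Ψ (Φ a) = 0 := by
      have hmem : Φ a ∈ LinearMap.ker Ψ := hrange ▸ LinearMap.mem_range_self Φ a
      rwa [LinearMap.mem_ker] at hmem
    set w := (Finset.univ.filter fun i : Fin N => Φ a i ≠ 0).card with hw
    have hpar : 2 ∣ w := wt_parity N M l hNpos hMl (Φ a) hvker
    have hwle : w ≤ M * (l - 1) := wt_le N M l hNpos hMl (by omega) hlcast (Φ a) hvker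
    have hw0 : w ≠ 0 := by
      intro h0
      apply ha0
      apply hΦinj
      rw [map_zero]
      funext i
      by_contra hne
      have hmem : i ∈ Finset.univ.filter fun i : Fin N => Φ a i ≠ 0 :=
        Finset.mem_filter.mpr ⟨Finset.mem_univ _, hne⟩
      rw [hw] at h0
      rw [Finset.card_eq_zero] at h0
      rw [h0] at hmem
      exact absurd hmem (Finset.notMem_empty i)
    refine ⟨w / 2, by omega, Nat.div_le_div_right hwle, ?_⟩
    rw [hSaDef a, hSa a, ← hw]
    have hNcast : (N : ℤ) = (l : ℤ) ^ m := by rw [hNdef]; push_cast; ring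
    obtain ⟨j2, hj⟩ := hpar
    rw [hj, hNcast, show 2 * j2 / 2 = j2 from by omega]
    push_cast
    ring
  · rintro ⟨j, hj1, hj2, rfl⟩
    set h := (l - 1) / 2 with hhdef
    have hlh : 2 * h = l - 1 := Nat.mul_div_cancel' h2dvd
    have hjMh : j ≤ M * h := by
      rw [hhdef, ← Nat.mul_div_assoc M h2dvd]
      exact hj2
    set v : Fin N → ZMod 2 := fun i =>
      if (i : ℕ) % M + (((i : ℕ) / M - 1) / 2) * M < j ∧ 1 ≤ (i : ℕ) / M then 1 else 0
      with hvdef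
    have hkey : ∀ r c : ℕ, r < M → c < l →
        uOf hNpos v (r + c * M)
          = if r + ((c - 1) / 2) * M < j ∧ 1 ≤ c then 1 else 0 := by
      intro r c hr hc
      have hrN : r + c * M < N := hlt' r c hr hc
      have hfin : (⟨(r + c * M) % N, Nat.mod_lt _ hNpos⟩ : Fin N) = ⟨r + c * M, hrN⟩ :=
        Fin.ext (Nat.mod_eq_of_lt hrN)
      rw [show uOf hNpos v (r + c * M) = v ⟨(r + c * M) % N, Nat.mod_lt _ hNpos⟩ from rfl, hfin,
        hvdef]
      have h1 : (r + c * M) % M = r := by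
        rw [Nat.add_mul_mod_self_right, Nat.mod_eq_of_lt hr]
      have h2 : (r + c * M) / M = c := by
        rw [Nat.add_mul_div_right _ _ hMpos, Nat.div_eq_of_lt hr, zero_add]
      simp only [h1, h2]
    obtain ⟨l', hl'⟩ : ∃ l', l = l' + 1 := ⟨l - 1, by omega⟩
    have hl'2 : l' = 2 * h := by omega
    have hvker : Ψ v = 0 := by
      rw [hΨdef]
      funext r
      rw [psi_comp N M l hNpos v r,
        Finset.sum_congr rfl fun c hc => hkey (r : ℕ) c r.isLt (Finset.mem_range.mp hc), hl',
        Finset.sum_range_succ']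
      have hf0 : (if (r : ℕ) + ((0 - 1) / 2) * M < j ∧ 1 ≤ 0 then (1 : ZMod 2) else 0) = 0 := by
        norm_num
      rw [hf0, add_zero,
        Finset.sum_congr rfl (fun i _ => by
          rw [show ((i + 1 - 1) / 2) = i / 2 from by omega]
          simp : ∀ i ∈ Finset.range l',
            (if (r : ℕ) + ((i + 1 - 1) / 2) * M < j ∧ 1 ≤ i + 1 then (1 : ZMod 2) else 0)
              = if (r : ℕ) + (i / 2) * M < j then 1 else 0),
        hl'2, sum_range_two_mul']
      refine Finset.sum_eq_zero fun t _ => ?_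
      rw [show 2 * t / 2 = t from by omega, show (2 * t + 1) / 2 = t from by omega]
      exact (by decide : ∀ x : ZMod 2, x + x = 0) _
    have hwt : (Finset.univ.filter fun i : Fin N => v i ≠ 0).card = 2 * j := by
      rw [wt_eq N M l hNpos hMl v]
      have hinner : ∀ r ∈ Finset.range M,
          (∑ c ∈ Finset.range l, if uOf hNpos v (r + c * M) ≠ 0 then 1 else 0)
            = 2 * ∑ t ∈ Finset.range h, (if r + t * M < j then 1 else 0) := by
        intro r hr
        have hrM := Finset.mem_range.mp hr
        have hc1 : ∀ c ∈ Finset.range l,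
            (if uOf hNpos v (r + c * M) ≠ 0 then (1:ℕ) else 0)
              = (if r + ((c - 1) / 2) * M < j ∧ 1 ≤ c then 1 else 0) := by
          intro c hc
          rw [hkey r c hrM (Finset.mem_range.mp hc)]
          by_cases hcond : r + ((c - 1) / 2) * M < j ∧ 1 ≤ c
          · rw [if_pos hcond, if_pos hcond, if_pos (by decide : (1 : ZMod 2) ≠ 0)]
          · rw [if_neg hcond, if_neg hcond, if_neg (by simp)]
        rw [Finset.sum_congr rfl hc1, hl', Finset.sum_range_succ']
        have hf0 : (if (r : ℕ) + ((0 - 1) / 2) * M < j ∧ 1 ≤ 0 then (1 : ℕ) else 0) = 0 := by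
          norm_num
        rw [hf0, add_zero,
          Finset.sum_congr rfl (fun i _ => by
            rw [show ((i + 1 - 1) / 2) = i / 2 from by omega]
            simp : ∀ i ∈ Finset.range l',
              (if (r : ℕ) + ((i + 1 - 1) / 2) * M < j ∧ 1 ≤ i + 1 then (1 : ℕ) else 0)
                = if (r : ℕ) + (i / 2) * M < j then 1 else 0),
          hl'2, sum_range_two_mul', Finset.mul_sum]
        refine Finset.sum_congr rfl fun t _ => ?_
        rw [show 2 * t / 2 = t from by omega, show (2 * t + 1) / 2 = t from by omega]
        omega
      rw [Finset.sum_congr rfl hinner, ← Finset.mul_sum]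
      congr 1
      rw [Finset.sum_comm]
      rw [Finset.sum_congr rfl (fun t _ => Finset.sum_congr rfl (fun r _ => by
        rw [Nat.add_comm, Nat.mul_comm] : ∀ r ∈ Finset.range M,
          (if r + t * M < j then (1:ℕ) else 0) = (fun x => if x < j then 1 else 0) (M * t + r)))]
      rw [← sum_range_mul'' (fun x => if x < j then (1:ℕ) else 0) M h]
      have hfil : Finset.filter (fun t => t < j) (Finset.range (M * h)) = Finset.range j := by
        ext t
        simp only [Finset.mem_filter, Finset.mem_range]
        omega
      rw [Finset.sum_boole, hfil, Finset.card_range]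
      simp
    have hvmem : v ∈ LinearMap.range Φ := by rw [hrange, LinearMap.mem_ker]; exact hvker
    obtain ⟨a, ha⟩ := hvmem
    have ha0 : a ≠ 0 := by
      intro h0
      rw [h0, map_zero] at ha
      have hz : (Finset.univ.filter fun i : Fin N => v i ≠ 0).card = 0 := by
        rw [← ha]
        simp
      omega
    refine ⟨a, ha0, ?_⟩
    rw [hSaDef a, hSa a, show (Finset.univ.filter fun i : Fin N => Φ a i ≠ 0).card = 2 * j from by
      rw [ha]; exact hwt]
    have hNcast : (N : ℤ) = (l : ℤ) ^ m := by rw [hNdef]; push_cast; ring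
    rw [hNcast]
    push_cast
    ring


end Paper
end
end

section
/- Let a ∈ F_q^* and b ∈ F_q. Then n = |D_{(a,b)}| = (1/2)·q·(q + 1 + S(a,0)) − 1 if b = 0, and n = |D_{(a,b)}| = (1/2)·q² − 1 if b ≠ 0. -/
open scoped BigOperators

noncomputable section

namespace Paper

section Aux
variable {F : Type*} [Field F] [Fintype F] [Algebra (ZMod 2) F]

lemma chi_zero' : chi (0:F) = 1 := by simp [chi]

lemma chi_add (x y : F) : chi (x + y) = chi x * chi y := by
  unfold chi
  rw [map_add]
  generalize Algebra.trace (ZMod 2) F x = s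
  generalize Algebra.trace (ZMod 2) F y = t
  revert s t; decide

lemma sum_chi_zero : ∑ y : F, chi y = 0 := by
  obtain ⟨x₀, hx₀⟩ := Algebra.trace_surjective (ZMod 2) F 1
  have h1 : chi x₀ = -1 := by simp [chi, hx₀]
  have h2 : ∑ y : F, chi (y + x₀) = ∑ y : F, chi y :=
    Fintype.sum_equiv (Equiv.addRight x₀) _ _ (fun y => rfl)
  simp only [chi_add, h1, mul_neg_one, Finset.sum_neg_distrib] at h2
  linarith

lemma sum_chi_mul {b : F} (hb : b ≠ 0) : ∑ y : F, chi (b * y) = 0 := by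
  have := Fintype.sum_equiv (Equiv.mulLeft₀ b hb) (fun y => chi (b * y)) chi (fun y => rfl)
  rw [this, sum_chi_zero]

lemma sum_units_eq [DecidableEq F] (g : F → ℤ) :
    ∑ x : Fˣ, g ↑x = ∑ x ∈ Finset.univ.filter (· ≠ (0:F)), g x := by
  rw [Finset.sum_subtype (p := fun x : F => x ≠ 0) (Finset.univ.filter (· ≠ (0:F))) (by simp) g]
  exact Fintype.sum_equiv unitsEquivNeZero _ _ (fun x => rfl)

lemma sum_field_eq [DecidableEq F] (g : F → ℤ) : ∑ x : F, g x = g 0 + ∑ x : Fˣ, g ↑x := by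
  rw [sum_units_eq, ← Finset.sum_filter_add_sum_filter_not Finset.univ (· = (0:F))]
  congr 1
  simp [Finset.filter_eq']

lemma sab_eq [DecidableEq F] (l m : ℕ) (a b : F) :
    Sab l m a b = ∑ x : Fˣ, chi (a * (x : F) ^ ((Fintype.card F - 1) / l ^ m) + b * x) := by
  rw [Sab]
  exact Finset.sum_congr
    (by rw [Subsingleton.elim (Fintype.ofFinite Fˣ) inferInstance]) (fun _ _ => rfl)

end Aux

theorem stmt4 (l m : ℕ) (hl : l.Prime) (hm : 1 ≤ m)
    {F : Type*} [Field F] [Fintype F] [Algebra (ZMod 2) F]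
    (hcard : Fintype.card F = 2 ^ Nat.totient (l ^ m))
    (h2 : orderOf (2 : ZMod (l ^ m)) = Nat.totient (l ^ m))
    (a : F) (ha : a ≠ 0) (b : F) :
    (b = 0 →
      ((Dset l m a b).ncard : ℚ) = 1 / 2 * (Fintype.card F : ℚ) * ((Fintype.card F : ℚ) + 1 + (Sab l m a 0 : ℚ)) - 1) ∧
    (b ≠ 0 →
      ((Dset l m a b).ncard : ℚ) = 1 / 2 * (Fintype.card F : ℚ) ^ 2 - 1) := by
  classical
  have htot : 0 < (l ^ m).totient := Nat.totient_pos.mpr (pow_pos hl.pos m)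
  have hq2 : 2 ≤ Fintype.card F := Fintype.one_lt_card
  haveI : NeZero (l ^ m) := ⟨(pow_pos hl.pos m).ne'⟩
  have hdvd : l ^ m ∣ Fintype.card F - 1 := by
    have h1 : ((2 : ZMod (l ^ m))) ^ (l ^ m).totient = 1 := h2 ▸ pow_orderOf_eq_one _
    have hc1 : ((Fintype.card F : ℕ) : ZMod (l ^ m)) = 1 := by rw [hcard]; push_cast; exact h1
    have hz : ((Fintype.card F - 1 : ℕ) : ZMod (l ^ m)) = 0 := by
      rw [Nat.cast_sub (by omega), hc1]; ring
    exact (ZMod.natCast_eq_zero_iff _ _).mp hz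
  set e := (Fintype.card F - 1) / l ^ m with he
  have hepos : 0 < e := Nat.div_pos (Nat.le_of_dvd (by omega) hdvd) (pow_pos hl.pos m)
  set S0 : Finset (F × F) :=
    Finset.univ.filter (fun p => Algebra.trace (ZMod 2) F (a * p.1 ^ e + b * p.2) = 0) with hS0
  have h00 : (0 : F × F) ∈ S0 := by
    simp [hS0, zero_pow hepos.ne']
  have hDfin : Dset l m a b = ↑(S0.erase 0) := by
    ext p
    simp only [Dset, Set.mem_setOf_eq, hS0, Finset.coe_erase, Finset.coe_filter,
      Finset.mem_univ, true_and, Set.mem_diff, Set.mem_setOf_eq, Set.mem_singleton_iff]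
    tauto
  have hcardD : (Dset l m a b).ncard = S0.card - 1 := by
    rw [hDfin, Set.ncard_coe_finset, Finset.card_erase_of_mem h00]
  have hpos : 1 ≤ S0.card := Finset.card_pos.mpr ⟨0, h00⟩
  have key : (2 : ℤ) * S0.card =
      (Fintype.card F : ℤ) ^ 2 + (∑ x : F, chi (a * x ^ e)) * (∑ y : F, chi (b * y)) := by
    have lhs : ∑ p : F × F, (1 + chi (a * p.1 ^ e + b * p.2)) =
        (Fintype.card F : ℤ) ^ 2 + (∑ x : F, chi (a * x ^ e)) * (∑ y : F, chi (b * y)) := by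
      rw [Finset.sum_add_distrib, Finset.sum_const]
      congr 1
      · simp only [Finset.card_univ, Fintype.card_prod, smul_eq_mul, mul_one]
        push_cast; ring
      · rw [Finset.sum_mul_sum, Fintype.sum_prod_type]
        exact Finset.sum_congr rfl fun x _ => Finset.sum_congr rfl fun y _ => chi_add _ _
    have lhs2 : ∑ p : F × F, (1 + chi (a * p.1 ^ e + b * p.2)) = 2 * S0.card := by
      have hterm : ∀ p : F × F, (1 + chi (a * p.1 ^ e + b * p.2)) =
          if Algebra.trace (ZMod 2) F (a * p.1 ^ e + b * p.2) = 0 then (2:ℤ) else 0 := by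
        intro p; unfold chi; split <;> ring
      rw [Finset.sum_congr rfl (fun p _ => hterm p), Finset.sum_ite, Finset.sum_const,
        Finset.sum_const_zero, add_zero, hS0]
      push_cast [smul_eq_mul]; ring
    rw [← lhs2, lhs]
  constructor
  · intro hb; subst hb
    have hy : ∑ y : F, chi ((0:F) * y) = (Fintype.card F : ℤ) := by
      simp [chi_zero', Finset.card_univ]
    have hx : ∑ x : F, chi (a * x ^ e) = 1 + Sab l m a 0 := by
      rw [sum_field_eq fun x => chi (a * x ^ e), sab_eq]
      congr 1
      · simp [chi_zero', zero_pow hepos.ne']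
      · exact Finset.sum_congr rfl fun x _ => by rw [← he]; ring_nf
    rw [hy, hx] at key
    have hcast : ((Dset l m a 0).ncard : ℚ) = (S0.card : ℚ) - 1 := by
      rw [hcardD]; push_cast [hpos]; ring
    have keyQ : 2 * (S0.card : ℚ) =
        (Fintype.card F : ℚ) ^ 2 + (1 + (Sab l m a 0 : ℚ)) * (Fintype.card F : ℚ) := by
      exact_mod_cast key
    rw [hcast]; linarith
  · intro hb
    rw [sum_chi_mul hb, mul_zero, add_zero] at key
    have hcast : ((Dset l m a b).ncard : ℚ) = (S0.card : ℚ) - 1 := by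
      rw [hcardD]; push_cast [hpos]; ring
    have keyQ : 2 * (S0.card : ℚ) = (Fintype.card F : ℚ) ^ 2 := by exact_mod_cast key
    rw [hcast]; linarith


end Paper
end
end

section
/- Let a ∈ F_q^*, b = 0, and (u,v) ∈ F_q² with (u,v) ≠ (0,0). Then the Hamming weight of the codeword c_{(u,v)} of C_{D_{(a,0)}} is (1/4)·q·(q + 1 + S(a,0)) if v ≠ 0, and is (1/4)·q·(q + S(a,0) − S(a,u)) if v = 0. -/
open scoped BigOperators

noncomputable section

namespace Paper

namespace Stmt5Aux

variable {F : Type*} [Field F] [Fintype F] [Algebra (ZMod 2) F]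

lemma chi_zero : chi (0 : F) = 1 := by simp [chi]

lemma zmod2_cases : ∀ t : ZMod 2, t = 0 ∨ t = 1 := by decide

lemma chi_add (x y : F) : chi (x + y) = chi x * chi y := by
  unfold chi
  rw [map_add]
  rcases zmod2_cases (Algebra.trace (ZMod 2) F x) with hs | hs <;>
    rcases zmod2_cases (Algebra.trace (ZMod 2) F y) with ht | ht <;>
      (simp [hs, ht]; try decide)

lemma sum_chi_mul {c : F} (hc : c ≠ 0) : ∑ x : F, chi (c * x) = 0 := by
  obtain ⟨b, hb⟩ : ∃ b : F, Algebra.trace (ZMod 2) F (c * b) ≠ 0 := by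
    have htr := (traceForm_nondegenerate (ZMod 2) F).1 c
    simp_rw [Algebra.traceForm_apply] at htr
    by_contra! hf
    exact hc (htr hf)
  have h1 : ∑ x : F, chi (c * (x + b)) = ∑ x : F, chi (c * x) :=
    Fintype.sum_equiv (Equiv.addRight b) _ _ (fun x => rfl)
  have h2 : ∀ x : F, chi (c * (x + b)) = chi (c * x) * (-1) := by
    intro x
    rw [mul_add, chi_add]
    congr 1
    simp [chi, hb]
  simp_rw [h2] at h1
  rw [← Finset.sum_mul] at h1
  linarith

lemma sum_units (f : F → ℤ) :
    letI : Fintype Fˣ := Fintype.ofFinite Fˣ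
    ∑ x : F, f x = f 0 + ∑ x : Fˣ, f (x : F) := by
  classical
  letI : Fintype Fˣ := Fintype.ofFinite Fˣ
  have h1 : ∑ x : Fˣ, f (x : F) = ∑ x : {a : F // a ≠ 0}, f (x : F) :=
    Fintype.sum_equiv unitsEquivNeZero _ _ (fun x => rfl)
  have h2 : ∑ x : {a : F // a ≠ 0}, f (x : F)
      = ∑ x ∈ Finset.univ.filter (fun a : F => a ≠ 0), f x := by
    rw [← Finset.sum_subtype (Finset.univ.filter (fun a : F => a ≠ 0)) (by simp) f]
  have h3 : ∑ x : F, f x = ∑ x ∈ Finset.univ.filter (fun a : F => a = 0), f x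
      + ∑ x ∈ Finset.univ.filter (fun a : F => a ≠ 0), f x := by
    rw [Finset.sum_filter_add_sum_filter_not]
  have h4 : Finset.univ.filter (fun a : F => a = 0) = {0} := by
    ext x; simp
  rw [h3, h4, Finset.sum_singleton, h1, h2]

lemma sum_full (l m : ℕ) (hN : (Fintype.card F - 1) / l ^ m ≠ 0) (a b : F) :
    ∑ x : F, chi (a * x ^ ((Fintype.card F - 1) / l ^ m) + b * x) = 1 + Sab l m a b := by
  rw [sum_units (fun x : F => chi (a * x ^ ((Fintype.card F - 1) / l ^ m) + b * x))]
  rw [zero_pow hN]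
  simp [chi_zero, Sab]

end Stmt5Aux

theorem stmt5 (l m : ℕ) (hl : l.Prime) (hm : 1 ≤ m)
    {F : Type*} [Field F] [Fintype F] [Algebra (ZMod 2) F]
    (hcard : Fintype.card F = 2 ^ Nat.totient (l ^ m))
    (h2 : orderOf (2 : ZMod (l ^ m)) = Nat.totient (l ^ m))
    (a : F) (ha : a ≠ 0) (u v : F) (huv : (u, v) ≠ (0, 0)) :
    (v ≠ 0 →
      (cwt l m a 0 u v : ℚ) = 1 / 4 * (Fintype.card F : ℚ) * ((Fintype.card F : ℚ) + 1 + (Sab l m a 0 : ℚ))) ∧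
    (v = 0 →
      (cwt l m a 0 u v : ℚ) =
        1 / 4 * (Fintype.card F : ℚ) * ((Fintype.card F : ℚ) + (Sab l m a 0 : ℚ) - (Sab l m a u : ℚ))) := by
  classical
  -- abbreviations
  have hq1 : 1 < Fintype.card F := Fintype.one_lt_card
  have hlmpos : 0 < l ^ m := pow_pos hl.pos m
  -- l^m divides q - 1
  have hdvd : l ^ m ∣ Fintype.card F - 1 := by
    have h1 : ((2 : ZMod (l ^ m))) ^ Nat.totient (l ^ m) = 1 := by
      rw [← h2]; exact pow_orderOf_eq_one _
    have h2' : ((Fintype.card F : ℕ) : ZMod (l ^ m)) = 1 := by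
      rw [hcard]; push_cast; exact h1
    have h3 : ((Fintype.card F - 1 : ℕ) : ZMod (l ^ m)) = 0 := by
      rw [Nat.cast_sub hq1.le, h2']; simp
    exact (ZMod.natCast_eq_zero_iff _ _).mp h3
  have hN : (Fintype.card F - 1) / l ^ m ≠ 0 := by
    have hle : l ^ m ≤ Fintype.card F - 1 := Nat.le_of_dvd (by omega) hdvd
    have h1 : 1 ≤ (Fintype.card F - 1) / l ^ m := (Nat.one_le_div_iff hlmpos).mpr hle
    omega
  have hfull : ∀ b : F,
      ∑ x : F, chi (a * x ^ ((Fintype.card F - 1) / l ^ m) + b * x) = 1 + Sab l m a b :=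
    fun b => Stmt5Aux.sum_full l m hN a b
  -- the counting set
  have hset : {p : F × F | p ∈ Dset l m a 0 ∧ Algebra.trace (ZMod 2) F (u * p.1 + v * p.2) ≠ 0}
      = {p : F × F | Algebra.trace (ZMod 2) F (a * p.1 ^ ((Fintype.card F - 1) / l ^ m)) = 0 ∧
          Algebra.trace (ZMod 2) F (u * p.1 + v * p.2) ≠ 0} := by
    ext p
    simp only [Set.mem_setOf_eq, Dset, zero_mul, add_zero]
    constructor
    · rintro ⟨⟨-, h1⟩, h2⟩; exact ⟨h1, h2⟩
    · rintro ⟨h1, h2⟩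
      refine ⟨⟨?_, h1⟩, h2⟩
      rintro rfl
      apply h2
      simp
  have hcount : (cwt l m a 0 u v : ℤ)
      = ∑ p : F × F, (if Algebra.trace (ZMod 2) F (a * p.1 ^ ((Fintype.card F - 1) / l ^ m)) = 0 ∧
          Algebra.trace (ZMod 2) F (u * p.1 + v * p.2) ≠ 0 then (1 : ℤ) else 0) := by
    have h1 : cwt l m a 0 u v = (Finset.univ.filter (fun p : F × F =>
        Algebra.trace (ZMod 2) F (a * p.1 ^ ((Fintype.card F - 1) / l ^ m)) = 0 ∧
        Algebra.trace (ZMod 2) F (u * p.1 + v * p.2) ≠ 0)).card := by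
      rw [cwt, hset, ← Set.ncard_coe_finset]
      congr 1
      ext p
      simp
    rw [h1, Finset.card_filter]
    push_cast
    rfl
  have hkey : (4 : ℤ) * ∑ p : F × F,
        (if Algebra.trace (ZMod 2) F (a * p.1 ^ ((Fintype.card F - 1) / l ^ m)) = 0 ∧
          Algebra.trace (ZMod 2) F (u * p.1 + v * p.2) ≠ 0 then (1 : ℤ) else 0)
      = ∑ p : F × F, (1 + chi (a * p.1 ^ ((Fintype.card F - 1) / l ^ m)))
          * (1 - chi (u * p.1 + v * p.2)) := by
    rw [Finset.mul_sum]
    refine Finset.sum_congr rfl fun p _ => ?_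
    by_cases h1 : Algebra.trace (ZMod 2) F (a * p.1 ^ ((Fintype.card F - 1) / l ^ m)) = 0 <;>
      by_cases hh2 : Algebra.trace (ZMod 2) F (u * p.1 + v * p.2) = 0
    · rw [if_neg (fun h => h.2 hh2)]
      simp only [chi]
      rw [if_pos h1, if_pos hh2]; ring
    · rw [if_pos ⟨h1, hh2⟩]
      simp only [chi]
      rw [if_pos h1, if_neg hh2]; ring
    · rw [if_neg (fun h => h1 h.1)]
      simp only [chi]
      rw [if_neg h1, if_pos hh2]; ring
    · rw [if_neg (fun h => h1 h.1)]
      simp only [chi]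
      rw [if_neg h1, if_neg hh2]; ring
  have hA : ∑ p : F × F, chi (a * p.1 ^ ((Fintype.card F - 1) / l ^ m))
      = (Fintype.card F : ℤ) * (1 + Sab l m a 0) := by
    rw [Fintype.sum_prod_type]
    simp only [Finset.sum_const, Finset.card_univ, nsmul_eq_mul]
    rw [← Finset.mul_sum]
    congr 1
    have := hfull 0
    simp only [zero_mul, add_zero] at this
    exact this
  have hB : ∑ p : F × F, chi (u * p.1 + v * p.2) = 0 := by
    simp_rw [Stmt5Aux.chi_add]
    rw [Fintype.sum_prod_type]
    simp_rw [← Finset.mul_sum]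
    rw [← Finset.sum_mul]
    by_cases hu : u = 0
    · have hv : v ≠ 0 := fun h => huv (by rw [hu, h])
      rw [Stmt5Aux.sum_chi_mul hv, mul_zero]
    · rw [Stmt5Aux.sum_chi_mul hu, zero_mul]
  have hC : ∑ p : F × F, chi (a * p.1 ^ ((Fintype.card F - 1) / l ^ m))
        * chi (u * p.1 + v * p.2)
      = (if v = 0 then (Fintype.card F : ℤ) * (1 + Sab l m a u) else 0) := by
    have hpt : ∀ p : F × F,
        chi (a * p.1 ^ ((Fintype.card F - 1) / l ^ m)) * chi (u * p.1 + v * p.2)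
        = chi (a * p.1 ^ ((Fintype.card F - 1) / l ^ m) + u * p.1) * chi (v * p.2) := by
      intro p
      rw [← Stmt5Aux.chi_add, ← Stmt5Aux.chi_add, add_assoc]
    simp_rw [hpt]
    rw [Fintype.sum_prod_type]
    simp_rw [← Finset.mul_sum]
    rw [← Finset.sum_mul]
    by_cases hv : v = 0
    · rw [if_pos hv, hv]
      have h0 : ∑ y : F, chi ((0 : F) * y) = (Fintype.card F : ℤ) := by
        simp [Stmt5Aux.chi_zero]
      rw [h0, hfull u]
      ring
    · rw [if_neg hv, Stmt5Aux.sum_chi_mul hv, mul_zero]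
  have hexpand : ∑ p : F × F, (1 + chi (a * p.1 ^ ((Fintype.card F - 1) / l ^ m)))
        * (1 - chi (u * p.1 + v * p.2))
      = (Fintype.card F : ℤ) ^ 2 + (Fintype.card F : ℤ) * (1 + Sab l m a 0)
        - (if v = 0 then (Fintype.card F : ℤ) * (1 + Sab l m a u) else 0) := by
    have hpt : ∀ p : F × F, (1 + chi (a * p.1 ^ ((Fintype.card F - 1) / l ^ m)))
        * (1 - chi (u * p.1 + v * p.2))
        = 1 + chi (a * p.1 ^ ((Fintype.card F - 1) / l ^ m)) - chi (u * p.1 + v * p.2)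
          - chi (a * p.1 ^ ((Fintype.card F - 1) / l ^ m)) * chi (u * p.1 + v * p.2) :=
      fun p => by ring
    simp_rw [hpt]
    rw [Finset.sum_sub_distrib, Finset.sum_sub_distrib, Finset.sum_add_distrib,
      Finset.sum_const, hA, hB, hC]
    simp only [Finset.card_univ, Fintype.card_prod, nsmul_eq_mul, mul_one]
    push_cast
    ring
  have hZ : 4 * (cwt l m a 0 u v : ℤ)
      = (Fintype.card F : ℤ) ^ 2 + (Fintype.card F : ℤ) * (1 + Sab l m a 0)
        - (if v = 0 then (Fintype.card F : ℤ) * (1 + Sab l m a u) else 0) := by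
    rw [hcount, hkey, hexpand]
  constructor
  · intro hv
    rw [if_neg hv, sub_zero] at hZ
    have hQ : (4 : ℚ) * (cwt l m a 0 u v : ℚ)
        = (Fintype.card F : ℚ) ^ 2 + (Fintype.card F : ℚ) * (1 + (Sab l m a 0 : ℚ)) := by
      exact_mod_cast congrArg (fun z : ℤ => (z : ℚ)) hZ
    linear_combination hQ / 4
  · intro hv
    rw [if_pos hv] at hZ
    have hQ : (4 : ℚ) * (cwt l m a 0 u v : ℚ)
        = (Fintype.card F : ℚ) ^ 2 + (Fintype.card F : ℚ) * (1 + (Sab l m a 0 : ℚ))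
          - (Fintype.card F : ℚ) * (1 + (Sab l m a u : ℚ)) := by
      exact_mod_cast congrArg (fun z : ℤ => (z : ℚ)) hZ
    linear_combination hQ / 4


end Paper
end
end

section
/- For every a ∈ F_q^*, neither E_a = {u ∈ F_q^* : wt((a·u^{−(q−1)/l^m})^{(0)}) is even} nor O_a = {u ∈ F_q^* : wt((a·u^{−(q−1)/l^m})^{(0)}) is odd} is empty. -/
open scoped BigOperators

noncomputable section

namespace Paper

/-- Auxiliary index function: `idxD l m hφ k` is the index `(k+1) l^{m-1} - 1` as an
element of `Fin (φ(l^m))` (with a junk value when out of range). -/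
def idxD (l m : ℕ) (hφ : 0 < Nat.totient (l ^ m)) (k : ℕ) : Fin (Nat.totient (l ^ m)) :=
  if h : (k + 1) * l ^ (m - 1) - 1 < Nat.totient (l ^ m) then ⟨_, h⟩ else ⟨0, hφ⟩

lemma idxD_val {l m : ℕ} (hφ : 0 < Nat.totient (l ^ m)) {k : ℕ}
    (h : (k + 1) * l ^ (m - 1) - 1 < Nat.totient (l ^ m)) :
    idxD l m hφ k = ⟨(k + 1) * l ^ (m - 1) - 1, h⟩ := dif_pos h

lemma idx_bound {l m : ℕ} (hl : l.Prime) (hm : 1 ≤ m) {k : ℕ} (hk : k < l - 1) :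
    (k + 1) * l ^ (m - 1) - 1 < Nat.totient (l ^ m) := by
  have hφ : Nat.totient (l ^ m) = l ^ (m - 1) * (l - 1) := Nat.totient_prime_pow hl hm
  have hL : 0 < l ^ (m - 1) := Nat.pow_pos hl.pos
  have h1 : (k + 1) * l ^ (m - 1) ≤ (l - 1) * l ^ (m - 1) :=
    Nat.mul_le_mul_right _ (by omega)
  have h2 : 1 ≤ (k + 1) * l ^ (m - 1) := by
    calc 1 = 1 * 1 := by ring
    _ ≤ (k + 1) * l ^ (m - 1) := Nat.mul_le_mul (by omega) hL
  have h3 : (k + 1) * l ^ (m - 1) ≤ l ^ (m - 1) * (l - 1) := h1.trans_eq (mul_comm _ _)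
  rw [hφ]
  omega

/-- The parity linear functional `u ↦ Σ_k (B.repr u)_{(k+1) l^{m-1} - 1}`. -/
def glD (l m : ℕ) {F : Type*} [Field F] [Fintype F] [Algebra (ZMod 2) F]
    (B : Module.Basis (Fin (Nat.totient (l ^ m))) (ZMod 2) F) (hφ : 0 < Nat.totient (l ^ m)) :
    F →ₗ[ZMod 2] ZMod 2 :=
  ∑ k ∈ Finset.range (l - 1), (Finsupp.lapply (idxD l m hφ k)).comp B.repr.toLinearMap

lemma glD_apply (l m : ℕ) {F : Type*} [Field F] [Fintype F] [Algebra (ZMod 2) F]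
    (B : Module.Basis (Fin (Nat.totient (l ^ m))) (ZMod 2) F) (hφ : 0 < Nat.totient (l ^ m))
    (u : F) :
    glD l m B hφ u = ∑ k ∈ Finset.range (l - 1), B.repr u (idxD l m hφ k) := by
  simp [glD, Finsupp.lapply]

theorem stmt11 (l m : ℕ) (hl : l.Prime) (hm : 1 ≤ m)
    {F : Type*} [Field F] [Fintype F] [Algebra (ZMod 2) F]
    (hcard : Fintype.card F = 2 ^ Nat.totient (l ^ m))
    (h2 : orderOf (2 : ZMod (l ^ m)) = Nat.totient (l ^ m))
    (γ : F) (hγ : orderOf γ = Fintype.card F - 1)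
    (B : Module.Basis (Fin (Nat.totient (l ^ m))) (ZMod 2) F)
    (hB : ∀ j : Fin (Nat.totient (l ^ m)),
      B j = (γ ^ ((Fintype.card F - 1) / l ^ m)) ^ ((j : ℕ) + 1))
    (a : F) (ha : a ≠ 0) :
    (∃ u : F, u ≠ 0 ∧
      Even (wtCoord l m B 0 (a * u⁻¹ ^ ((Fintype.card F - 1) / l ^ m)))) ∧
    (∃ u : F, u ≠ 0 ∧
      Odd (wtCoord l m B 0 (a * u⁻¹ ^ ((Fintype.card F - 1) / l ^ m)))) := by
  classical
  have hLpos : 0 < l ^ (m - 1) := Nat.pow_pos hl.pos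
  have hφeq : (Nat.totient (l ^ m)) = l ^ (m - 1) * (l - 1) := Nat.totient_prime_pow hl hm
  have hφpos : 0 < (Nat.totient (l ^ m)) := by
    rw [hφeq]; exact Nat.mul_pos hLpos (by have := hl.two_le; omega)
  set N := (Fintype.card F - 1) / l ^ m with hN
  set α := γ ^ N with hα
  -- l^m divides 2^(Nat.totient (l ^ m)) - 1
  have hlm1 : 1 < l ^ m := by
    calc 1 < l := hl.one_lt
    _ = l ^ 1 := (pow_one l).symm
    _ ≤ l ^ m := Nat.pow_le_pow_right hl.pos hm
  have h2pow : (2 : ZMod (l ^ m)) ^ (Nat.totient (l ^ m)) = 1 := by rw [← h2]; exact pow_orderOf_eq_one 2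
  have h2le : 1 ≤ 2 ^ (Nat.totient (l ^ m)) := Nat.one_le_two_pow
  have hdvd : l ^ m ∣ 2 ^ (Nat.totient (l ^ m)) - 1 := by
    rw [← ZMod.natCast_eq_zero_iff]
    rw [Nat.cast_sub h2le]
    push_cast
    rw [h2pow, sub_self]
  -- l is odd
  have hl2 : l ≠ 2 := by
    intro h
    subst h
    have hφ1 : 1 ≤ Nat.totient (2 ^ m) := hφpos
    have h2d : 2 ^ Nat.totient (2 ^ m) = 2 * 2 ^ (Nat.totient (2 ^ m) - 1) := by
      rw [← pow_succ']
      congr 1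
      omega
    have hdvd2 : (2 : ℕ) ∣ 2 ^ Nat.totient (2 ^ m) - 1 :=
      dvd_trans (dvd_pow_self 2 (by omega : m ≠ 0)) hdvd
    obtain ⟨c, hc⟩ := hdvd2
    have hX : 1 ≤ 2 ^ (Nat.totient (2 ^ m) - 1) := Nat.one_le_two_pow
    omega
  have hlodd : Odd l := hl.odd_of_ne_two hl2
  have hl3 : 3 ≤ l := by
    have := hl.two_le
    rcases hlodd with ⟨j, hj⟩
    omega
  -- basic facts about γ and α
  have hcardpos : 0 < Fintype.card F := Fintype.card_pos
  have hcard1 : 1 ≤ Fintype.card F - 1 := by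
    rw [hcard]
    have : 2 ≤ 2 ^ (Nat.totient (l ^ m)) := by
      calc 2 = 2 ^ 1 := (pow_one 2).symm
      _ ≤ 2 ^ (Nat.totient (l ^ m)) := Nat.pow_le_pow_right (by norm_num) hφpos
    omega
  have hdvd' : l ^ m ∣ Fintype.card F - 1 := by rw [hcard]; exact hdvd
  have hNl : N * l ^ m = Fintype.card F - 1 := Nat.div_mul_cancel hdvd'
  have hγpow : γ ^ (Fintype.card F - 1) = 1 := by rw [← hγ]; exact pow_orderOf_eq_one γ
  have hγ0 : γ ≠ 0 := by
    intro h
    rw [h, zero_pow (by omega)] at hγpow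
    exact zero_ne_one hγpow
  have hαlm : α ^ l ^ m = 1 := by rw [hα, ← pow_mul, hNl, hγpow]
  have hα1 : α ≠ 1 := by
    intro h
    have hφ2 : 2 ≤ (Nat.totient (l ^ m)) := by
      rw [hφeq]
      calc 2 = 1 * 2 := by ring
      _ ≤ l ^ (m - 1) * (l - 1) := Nat.mul_le_mul hLpos (by omega)
    have e0 : B ⟨0, by omega⟩ = 1 := by rw [hB, h, one_pow]
    have e1 : B ⟨1, by omega⟩ = 1 := by rw [hB, h, one_pow]
    have := B.injective (e0.trans e1.symm)
    simp at this
  have hgeo : ∑ i ∈ Finset.range (l ^ m), α ^ i = 0 := by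
    have h := geom_sum_mul α (l ^ m)
    rw [hαlm, sub_self] at h
    rcases mul_eq_zero.mp h with h' | h'
    · exact h'
    · exact absurd (sub_eq_zero.mp h') hα1
  -- the parity functional
  set gl := glD l m B hφpos with hgl
  -- parity of wtCoord equals gl
  have hwt : ∀ u : F, ((wtCoord l m B 0 u : ℕ) : ZMod 2) = gl u := by
    intro u
    have hset : {k : ℕ | k < l - 1 ∧ ∃ h : (k + 1) * l ^ (m - 1) - 0 - 1 < Nat.totient (l ^ m),
        B.repr u ⟨(k + 1) * l ^ (m - 1) - 0 - 1, h⟩ = 1} =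
        ↑((Finset.range (l - 1)).filter fun k => B.repr u (idxD l m hφpos k) = 1) := by
      ext k
      simp only [Set.mem_setOf_eq, Finset.coe_filter, Finset.mem_range, Nat.sub_zero]
      constructor
      · rintro ⟨hk, h, hv⟩
        refine ⟨hk, ?_⟩
        rw [idxD_val hφpos h]
        exact hv
      · rintro ⟨hk, hv⟩
        have h := idx_bound hl hm hk
        refine ⟨hk, h, ?_⟩
        rw [idxD_val hφpos h] at hv
        exact hv
    rw [wtCoord, hset, Set.ncard_coe_finset, glD_apply]
    rw [Finset.card_filter]
    push_cast
    refine Finset.sum_congr rfl fun k _ => ?_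
    have : ∀ x : ZMod 2, (if x = 1 then (1 : ZMod 2) else 0) = x := by decide
    exact this _
  -- gl is nonzero: gl (B (idxD 0)) = 1
  have hglB : gl (B (idxD l m hφpos 0)) = 1 := by
    rw [hgl, glD_apply]
    have hrepr : B.repr (B (idxD l m hφpos 0)) = Finsupp.single (idxD l m hφpos 0) 1 :=
      B.repr_self _
    rw [hrepr]
    rw [Finset.sum_eq_single_of_mem 0 (Finset.mem_range.mpr (by omega))]
    · simp
    · intro k hk hk0
      rw [Finsupp.single_apply, if_neg]
      intro he
      have h1 := idx_bound hl hm (Finset.mem_range.mp hk)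
      have h2 := idx_bound hl hm (show 0 < l - 1 by omega)
      rw [idxD_val hφpos h1, idxD_val hφpos h2] at he
      have : (0 + 1) * l ^ (m - 1) - 1 = (k + 1) * l ^ (m - 1) - 1 := congrArg Fin.val he
      have hk1 : 1 ≤ (k + 1) * l ^ (m - 1) := le_trans (by omega) (Nat.le_mul_of_pos_right _ hLpos)
      have hne : (0 + 1) * l ^ (m - 1) = (k + 1) * l ^ (m - 1) := by omega
      have := Nat.eq_of_mul_eq_mul_right hLpos hne
      omega
  -- every α^i is of the form u⁻¹ ^ N for nonzero u
  have hrep : ∀ i : ℕ, ∃ u : F, u ≠ 0 ∧ u⁻¹ ^ N = α ^ i := by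
    intro i
    refine ⟨(γ ^ i)⁻¹, inv_ne_zero (pow_ne_zero _ hγ0), ?_⟩
    rw [inv_inv, ← pow_mul, mul_comm, pow_mul, ← hα]
  -- parity casts
  have hEvenCast : ∀ n : ℕ, Even n ↔ (n : ZMod 2) = 0 := by
    intro n
    rw [even_iff_two_dvd, ← ZMod.natCast_eq_zero_iff]
  have hZ2 : ∀ x : ZMod 2, ¬x = 0 ↔ x = 1 := by decide
  constructor
  · -- existence of even: otherwise gl (a * α^i) = 1 for all i
    by_contra hcon
    push_neg at hcon
    have hall : ∀ i : ℕ, gl (a * α ^ i) = 1 := by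
      intro i
      obtain ⟨u, hu0, hu⟩ := hrep i
      have := hcon u hu0
      rw [hEvenCast, hwt, hu] at this
      exact (hZ2 _).mp this
    have hsum : ∑ i ∈ Finset.range (l ^ m), gl (a * α ^ i) = 0 := by
      rw [← map_sum, ← Finset.mul_sum, hgeo, mul_zero, map_zero]
    rw [Finset.sum_congr rfl fun i _ => hall i] at hsum
    rw [Finset.sum_const, Finset.card_range, nsmul_eq_mul, mul_one] at hsum
    have hlmodd : l ^ m % 2 = 1 := Nat.odd_iff.mp (hlodd.pow)
    rw [← Nat.mod_add_div (l ^ m) 2, hlmodd] at hsum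
    push_cast at hsum
    rw [show ((2 : ZMod 2)) = 0 by decide, zero_mul, add_zero] at hsum
    exact one_ne_zero hsum
  · -- existence of odd: otherwise gl (a * α^i) = 0 for all i, so gl = 0
    by_contra hcon
    push_neg at hcon
    have hall : ∀ i : ℕ, gl (a * α ^ i) = 0 := by
      intro i
      obtain ⟨u, hu0, hu⟩ := hrep i
      have := hcon u hu0
      rw [Nat.not_odd_iff_even, hEvenCast, hwt, hu] at this
      exact this
    have hker : ∀ w : F, gl (a * w) = 0 := by
      intro w
      conv_lhs => rw [← B.sum_repr w]
      rw [Finset.mul_sum, map_sum]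
      refine Finset.sum_eq_zero fun j _ => ?_
      rw [mul_smul_comm, map_smul, hB j, hall ((j : ℕ) + 1), smul_zero]
    have := hker (a⁻¹ * B (idxD l m hφpos 0))
    rw [← mul_assoc, mul_inv_cancel₀ ha, one_mul, hglB] at this
    exact one_ne_zero this

end Paper
end
end
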